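/- arXiv:1204.4663 — 4 statements merged into one kernel-verified Lean document; each statement's English description precedes it below -/
import Mathlib

section
/- Let n ≥ 1 and let d ≥ 2 be an integer, and set d₀ = min(2n, d). For i = 1, …, ⌊d₀/2⌋ let f_{d−2i} ∈ ℤ[x_1, …, x_n] be homogeneous of degree d−2i, and set P = Σ_{i=1}^{⌊d₀/2⌋} f_{d−2i}·t_i (a homogeneous polynomial of degree d). If a positive integer M divides P (i.e. P ∈ M·ℤ[x_1,…,x_n]), then there exist polynomials f̂_{d−2i} ∈ ℤ[x_1, …, x_n], i = 1, …, ⌊d₀/2⌋, such that Σ_{i=1}^{⌊d₀/2⌋} f̂_{d−2i}·t_i = P and M divides every f̂_{d−2i}. -/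
open MvPolynomial Finset

/-- `t n i` is the `i`-th elementary symmetric polynomial evaluated at the squares
of the variables, `t_i = s_i(x_1^2, …, x_n^2)`. -/
noncomputable def t (n i : ℕ) : MvPolynomial (Fin n) ℤ :=
  ∑ S ∈ Finset.powersetCard i (Finset.univ : Finset (Fin n)),
    ∏ j ∈ S, (X j : MvPolynomial (Fin n) ℤ) ^ 2

namespace Aux
variable (n : ℕ)
noncomputable def Y (r : ℕ) : MvPolynomial (Fin n) ℤ := if h : r < n then (X (⟨r, h⟩ : Fin n)) ^ 2 else 0
noncomputable def Hc : ℕ → ℕ → MvPolynomial (Fin n) ℤ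
  | 0, _ => 1
  | d+1, r => if r < n then Hc (d+1) (r+1) + Y n r * Hc d r else 0
  termination_by d r => (d, n - r)
  decreasing_by
  · exact Prod.Lex.right _ (by omega)
  · exact Prod.Lex.left _ _ (by omega)
noncomputable def Ec : ℕ → ℕ → MvPolynomial (Fin n) ℤ
  | 0, _ => 1
  | _+1, 0 => 0
  | j+1, r+1 => Ec (j+1) r + Y n r * Ec j r
lemma Hc_zero (r : ℕ) : Hc n 0 r = 1 := by rw [Hc]
lemma Hc_of_ge {r : ℕ} (h : ¬ r < n) (d : ℕ) : Hc n (d+1) r = 0 := by rw [Hc, if_neg h]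
lemma Hc_succ_r (d r : ℕ) : Hc n (d+1) (r+1) = Hc n (d+1) r - Y n r * Hc n d r := by
  by_cases h : r < n
  · conv_rhs => rw [Hc]
    rw [if_pos h]; ring
  · rw [Hc_of_ge n h, Hc_of_ge n (by omega), Y, dif_neg h]; ring
lemma Ec_zero (r : ℕ) : Ec n 0 r = 1 := by rw [Ec]
lemma Ec_succ_zero (j : ℕ) : Ec n (j+1) 0 = 0 := by rw [Ec]
lemma Ec_succ (j r : ℕ) : Ec n (j+1) (r+1) = Ec n (j+1) r + Y n r * Ec n j r := by rw [Ec]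

lemma Ec_eq_zero_of_lt : ∀ r j, r < j → Ec n j r = 0 := by
  intro r
  induction r with
  | zero => intro j hj; match j, hj with | j+1, _ => exact Ec_succ_zero n j
  | succ r ih =>
    intro j hj
    match j, hj with
    | j+1, hj =>
      rw [Ec_succ, ih (j+1) (by omega), ih j (by omega), mul_zero, add_zero]

/-- the generating function identity. -/
lemma Hc_eq_sum : ∀ r d, Hc n d r
    = ∑ j ∈ range (d+1), (-1 : MvPolynomial (Fin n) ℤ)^j * (Ec n j r * Hc n (d-j) 0) := by
  intro r
  induction r with
  | zero =>
    intro d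
    rw [Finset.sum_eq_single 0]
    · simp [Ec_zero]
    · intro j _ hj
      match j, hj with
      | j+1, _ => rw [Ec_succ_zero]; ring
    · intro h; simp at h
  | succ r ih =>
    intro d
    match d with
    | 0 => simp [Hc_zero, Ec_zero]
    | d+1 =>
      rw [Hc_succ_r, ih (d+1), ih d, Finset.sum_range_succ' _ (d+1)]
      rw [Finset.sum_range_succ' (fun j => (-1 : MvPolynomial (Fin n) ℤ)^j
        * (Ec n j (r+1) * Hc n (d+1-j) 0)) (d+1)]
      simp only [Ec_succ, Ec_zero]
      have e1 : ∀ x ∈ range (d+1),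
          (-1 : MvPolynomial (Fin n) ℤ)^(x+1) * ((Ec n (x+1) r + Y n r * Ec n x r) * Hc n (d+1-(x+1)) 0)
          = (-1 : MvPolynomial (Fin n) ℤ)^(x+1) * (Ec n (x+1) r * Hc n (d+1-(x+1)) 0)
            + (-(Y n r * ((-1 : MvPolynomial (Fin n) ℤ)^x * (Ec n x r * Hc n (d-x) 0)))) := by
        intro x _
        have hx : d + 1 - (x + 1) = d - x := by omega
        rw [hx]; ring
      rw [Finset.sum_congr rfl e1, Finset.sum_add_distrib, Finset.mul_sum, Finset.sum_neg_distrib]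
      ring

lemma Hc_n (d : ℕ) : Hc n (d+1) n = 0 := Hc_of_ge n (by omega) d

lemma Ec_formula : ∀ r, r ≤ n → ∀ j, Ec n j r
    = ∑ S ∈ Finset.powersetCard j ((Finset.univ : Finset (Fin n)).filter (fun l : Fin n => (l : ℕ) < r)),
      ∏ l ∈ S, (X l : MvPolynomial (Fin n) ℤ) ^ 2 := by
  intro r
  induction r with
  | zero =>
    intro _ j
    have he : (Finset.univ : Finset (Fin n)).filter (fun l : Fin n => (l : ℕ) < 0) = ∅ := by
      ext l; simp
    rw [he]
    match j with
    | 0 => simp [Ec_zero]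
    | j+1 =>
      rw [Ec_succ_zero, Finset.powersetCard_eq_empty.mpr (by simp)]
      simp
  | succ r ih =>
    intro hr j
    have hrn : r < n := by omega
    have hins : (Finset.univ : Finset (Fin n)).filter (fun l : Fin n => (l : ℕ) < r+1)
        = insert (⟨r, hrn⟩ : Fin n) ((Finset.univ : Finset (Fin n)).filter (fun l : Fin n => (l : ℕ) < r)) := by
      ext l
      simp only [Finset.mem_filter, Finset.mem_univ, true_and, Finset.mem_insert]
      constructor
      · intro h
        rcases Nat.lt_succ_iff_lt_or_eq.mp h with h | h
        · exact Or.inr (by simpa using h)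
        · exact Or.inl (by ext; simpa using h)
      · rintro (rfl | h)
        · exact Nat.lt_succ_self r
        · exact Nat.lt_succ_of_lt h
    have hnotmem : (⟨r, hrn⟩ : Fin n) ∉ (Finset.univ : Finset (Fin n)).filter (fun l : Fin n => (l : ℕ) < r) := by
      intro h
      rw [Finset.mem_filter] at h
      exact absurd h.2 (by simp)
    rw [hins]
    match j with
    | 0 => simp [Ec_zero]
    | j+1 =>
      rw [Finset.powersetCard_succ_insert hnotmem]
      rw [Finset.sum_union]
      · rw [Ec_succ, ih (by omega) (j+1), ih (by omega) j]
        congr 1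
        rw [Finset.sum_image]
        · rw [Finset.mul_sum]
          apply Finset.sum_congr rfl
          intro S hS
          rw [Finset.mem_powersetCard] at hS
          rw [Finset.prod_insert (fun hc => hnotmem (hS.1 hc))]
          rw [Y, dif_pos hrn]
        · intro S hS T hT hST
          rw [Finset.mem_coe, Finset.mem_powersetCard] at hS hT
          have hrS := fun hc => hnotmem (hS.1 hc)
          have hrT := fun hc => hnotmem (hT.1 hc)
          have h1 := congrArg (fun u => Finset.erase u (⟨r, hrn⟩ : Fin n)) hST
          simpa [Finset.erase_insert hrS, Finset.erase_insert hrT] using h1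
      · rw [Finset.disjoint_left]
        intro S hS hS'
        rw [Finset.mem_powersetCard] at hS
        rw [Finset.mem_image] at hS'
        obtain ⟨T, hT, rfl⟩ := hS'
        exact hnotmem (hS.1 (Finset.mem_insert_self _ _))

lemma Ec_n (j : ℕ) : Ec n j n = t n j := by
  rw [Ec_formula n n le_rfl j, t]
  congr 1
  ext l
  simp [Fin.is_lt]

/-- `Rep n k G Q`: `Q` is a combination `∑_{i=1}^k c i * G i`. -/
def Rep (k : ℕ) (G : ℕ → MvPolynomial (Fin n) ℤ) (Q : MvPolynomial (Fin n) ℤ) : Prop :=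
  ∃ c : ℕ → MvPolynomial (Fin n) ℤ, Q = ∑ i ∈ Finset.Icc 1 k, c i * G i

variable {n}

lemma Rep.zero {k : ℕ} {G : ℕ → MvPolynomial (Fin n) ℤ} : Rep n k G 0 :=
  ⟨0, by simp⟩

lemma Rep.add {k : ℕ} {G : ℕ → MvPolynomial (Fin n) ℤ} {Q₁ Q₂ : MvPolynomial (Fin n) ℤ}
    (h₁ : Rep n k G Q₁) (h₂ : Rep n k G Q₂) : Rep n k G (Q₁ + Q₂) := by
  obtain ⟨c₁, rfl⟩ := h₁; obtain ⟨c₂, rfl⟩ := h₂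
  exact ⟨c₁ + c₂, by rw [← Finset.sum_add_distrib]; apply Finset.sum_congr rfl; intros; simp; ring⟩

lemma Rep.mul_left {k : ℕ} {G : ℕ → MvPolynomial (Fin n) ℤ} {Q : MvPolynomial (Fin n) ℤ}
    (r : MvPolynomial (Fin n) ℤ) (h : Rep n k G Q) : Rep n k G (r * Q) := by
  obtain ⟨c, rfl⟩ := h
  exact ⟨fun i => r * c i, by rw [Finset.mul_sum]; apply Finset.sum_congr rfl; intros; ring⟩

lemma Rep.neg {k : ℕ} {G : ℕ → MvPolynomial (Fin n) ℤ} {Q : MvPolynomial (Fin n) ℤ}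
    (h : Rep n k G Q) : Rep n k G (-Q) := by
  have := h.mul_left (-1); rwa [neg_one_mul] at this

lemma Rep.sub {k : ℕ} {G : ℕ → MvPolynomial (Fin n) ℤ} {Q₁ Q₂ : MvPolynomial (Fin n) ℤ}
    (h₁ : Rep n k G Q₁) (h₂ : Rep n k G Q₂) : Rep n k G (Q₁ - Q₂) := by
  rw [sub_eq_add_neg]; exact h₁.add h₂.neg

lemma Rep.gen {k i : ℕ} {G : ℕ → MvPolynomial (Fin n) ℤ} (hi : i ∈ Finset.Icc 1 k) :
    Rep n k G (G i) := by
  refine ⟨fun j => if j = i then 1 else 0, ?_⟩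
  rw [Finset.sum_eq_single i]
  · simp
  · intro j _ hj; simp [hj]
  · intro h; exact absurd hi h

lemma Rep.sum {k : ℕ} {G : ℕ → MvPolynomial (Fin n) ℤ} {ι : Type*} {s : Finset ι}
    {F : ι → MvPolynomial (Fin n) ℤ} (h : ∀ i ∈ s, Rep n k G (F i)) :
    Rep n k G (∑ i ∈ s, F i) := by
  classical
  induction s using Finset.induction with
  | empty => simpa using Rep.zero
  | insert x s hx ih =>
    rw [Finset.sum_insert hx]
    exact (h _ (Finset.mem_insert_self _ _)).add (ih fun i hi => h i (Finset.mem_insert_of_mem hi))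

lemma Rep.mono {k k' : ℕ} (hkk : k ≤ k') {G : ℕ → MvPolynomial (Fin n) ℤ}
    {Q : MvPolynomial (Fin n) ℤ} (h : Rep n k G Q) : Rep n k' G Q := by
  obtain ⟨c, rfl⟩ := h
  refine ⟨fun i => if i ≤ k then c i else 0, ?_⟩
  have h1 : ∀ i ∈ Finset.Icc 1 k, c i * G i
      = (fun i => if i ≤ k then c i else 0) i * G i := by
    intro i hi
    simp only [if_pos (Finset.mem_Icc.mp hi).2]
  rw [Finset.sum_congr rfl h1]
  apply Finset.sum_subset (Finset.Icc_subset_Icc_right hkk)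
  intro i hmem hnot
  rw [Finset.mem_Icc] at hmem hnot
  simp only [if_neg (show ¬ i ≤ k by omega), zero_mul]

variable (n)

/-- `g i = h_i(x_{i-1}², …, x_{n-1}²)` (informally `h_i(x_i²,…,x_n²)` in 1-based naming). -/
noncomputable def g (i : ℕ) : MvPolynomial (Fin n) ℤ := Hc n i (i - 1)

variable {n}

/-- The key consequence of the generating function identity:
`H m 0 = (-1)^(m-1) t_m + (combination of t_1, …, t_(m-1))`. -/
lemma Hc_zero_rep {m : ℕ} (hm : 1 ≤ m) :
    Rep n (m-1) (t n) (Hc n m 0 - (-1 : MvPolynomial (Fin n) ℤ)^(m-1) * t n m) := by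
  match m, hm with
  | m+1, _ =>
    have h0 : (0 : MvPolynomial (Fin n) ℤ)
        = ∑ j ∈ Finset.range (m+2), (-1 : MvPolynomial (Fin n) ℤ)^j * (Ec n j n * Hc n (m+1-j) 0) := by
      rw [← Hc_eq_sum]; exact (Hc_n n m).symm
    rw [Finset.sum_range_succ] at h0
    rw [Finset.sum_range_succ'] at h0
    simp only [pow_zero, one_mul, Ec_zero, Nat.sub_zero, Nat.sub_self, Hc_zero] at h0
    have h2 : ∑ j ∈ Finset.range m, (-1 : MvPolynomial (Fin n) ℤ)^(j+1) * (Ec n (j+1) n * Hc n (m+1-(j+1)) 0)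
        = ∑ j ∈ Finset.range m, (-1 : MvPolynomial (Fin n) ℤ)^(j+1) * (Ec n (j+1) n * Hc n (m-j) 0) :=
      Finset.sum_congr rfl (fun j hj => by rw [Nat.succ_sub_succ])
    rw [h2] at h0
    have hp : (-1 : MvPolynomial (Fin n) ℤ)^(m+1) = -(-1 : MvPolynomial (Fin n) ℤ)^m := by
      rw [pow_succ]; ring
    rw [hp, Ec_n n (m+1)] at h0
    have hred : (m + 1 - 1) = m := by omega
    rw [hred]
    have hsimp : Hc n (m+1) 0 - (-1 : MvPolynomial (Fin n) ℤ)^m * t n (m+1)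
        = -∑ j ∈ Finset.range m, (-1 : MvPolynomial (Fin n) ℤ)^(j+1) * (Ec n (j+1) n * Hc n (m-j) 0) := by
      linear_combination -h0
    rw [hsimp]
    apply Rep.neg
    apply Rep.sum
    intro j hj
    rw [Finset.mem_range] at hj
    rw [Ec_n]
    have hsh : (-1 : MvPolynomial (Fin n) ℤ)^(j+1) * (t n (j+1) * Hc n (m-j) 0)
        = ((-1 : MvPolynomial (Fin n) ℤ)^(j+1) * Hc n (m-j) 0) * t n (j+1) := by ring
    rw [hsh]
    exact ((Rep.gen (k := m) (i := j+1) (G := t n) (by rw [Finset.mem_Icc]; omega)).mul_left _)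

lemma Hc_zero_rep' {m : ℕ} (hm : 1 ≤ m) : Rep n m (t n) (Hc n m 0) := by
  have h1 := (Hc_zero_rep (n := n) hm).mono (show m - 1 ≤ m by omega)
  have h2 : Rep n m (t n) ((-1 : MvPolynomial (Fin n) ℤ)^(m-1) * t n m) :=
    (Rep.gen (k := m) (i := m) (by rw [Finset.mem_Icc]; omega)).mul_left _
  have := h1.add h2
  simpa using this

lemma g_sub_rep {i : ℕ} (hi : 1 ≤ i) :
    Rep n (i-1) (t n) (g n i - (-1 : MvPolynomial (Fin n) ℤ)^(i-1) * t n i) := by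
  match i, hi with
  | i+1, _ =>
    have hred : i + 1 - 1 = i := by omega
    rw [hred]
    have hg : g n (i+1) = ∑ j ∈ Finset.range (i+1),
        (-1 : MvPolynomial (Fin n) ℤ)^j * (Ec n j i * Hc n (i+1-j) 0) := by
      rw [g, hred, Hc_eq_sum n i (i+1), Finset.sum_range_succ,
        Ec_eq_zero_of_lt n i (i+1) (by omega)]
      simp
    rw [hg, Finset.sum_range_succ']
    simp only [pow_zero, one_mul, Ec_zero, Nat.sub_zero]
    have hsp : ∑ j ∈ Finset.range i, (-1 : MvPolynomial (Fin n) ℤ)^(j+1) * (Ec n (j+1) i * Hc n (i+1-(j+1)) 0)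
        + Hc n (i+1) 0 - (-1 : MvPolynomial (Fin n) ℤ)^i * t n (i+1)
        = (Hc n (i+1) 0 - (-1 : MvPolynomial (Fin n) ℤ)^(i+1-1) * t n (i+1))
          + ∑ j ∈ Finset.range i, ((-1 : MvPolynomial (Fin n) ℤ)^(j+1) * Ec n (j+1) i) * Hc n (i-j) 0 := by
      rw [hred]
      rw [show (∑ j ∈ Finset.range i, (-1 : MvPolynomial (Fin n) ℤ)^(j+1) * (Ec n (j+1) i * Hc n (i+1-(j+1)) 0))
          = ∑ j ∈ Finset.range i, ((-1 : MvPolynomial (Fin n) ℤ)^(j+1) * Ec n (j+1) i) * Hc n (i-j) 0 from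
        Finset.sum_congr rfl (fun j hj => by rw [Nat.succ_sub_succ]; ring)]
      ring
    rw [hsp]
    apply Rep.add
    · exact (Hc_zero_rep (by omega)).mono (by omega)
    · apply Rep.sum
      intro j hj
      rw [Finset.mem_range] at hj
      exact ((Hc_zero_rep' (show 1 ≤ i - j by omega)).mono (by omega)).mul_left _

lemma rep_zero_iff {G : ℕ → MvPolynomial (Fin n) ℤ} {Q : MvPolynomial (Fin n) ℤ} :
    Rep n 0 G Q ↔ Q = 0 := by
  constructor
  · rintro ⟨c, rfl⟩; simp
  · rintro rfl; exact Rep.zero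

lemma Rep.split {k : ℕ} {G : ℕ → MvPolynomial (Fin n) ℤ} {Q : MvPolynomial (Fin n) ℤ}
    (h : Rep n (k+1) G Q) :
    ∃ c : MvPolynomial (Fin n) ℤ, ∃ Q', Q = Q' + c * G (k+1) ∧ Rep n k G Q' := by
  obtain ⟨c, rfl⟩ := h
  exact ⟨c (k+1), ∑ i ∈ Finset.Icc 1 k, c i * G i,
    by rw [← Finset.sum_Icc_succ_top (by omega : 1 ≤ k + 1)], ⟨c, rfl⟩⟩

lemma rep_t_iff_rep_g : ∀ k, ∀ Q : MvPolynomial (Fin n) ℤ,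
    Rep n k (t n) Q ↔ Rep n k (g n) Q := by
  intro k
  induction k with
  | zero => intro Q; rw [rep_zero_iff, rep_zero_iff]
  | succ k ih =>
    have hW : Rep n k (g n) (g n (k+1) - (-1 : MvPolynomial (Fin n) ℤ)^k * t n (k+1)) := by
      rw [← ih]
      have := g_sub_rep (n := n) (i := k+1) (by omega)
      simpa using this
    intro Q
    constructor
    · rintro h
      obtain ⟨c, Q', rfl, hQ'⟩ := h.split
      apply Rep.add ((ih Q').mp hQ' |>.mono (by omega))
      -- c * t (k+1) in terms of g
      have hid : c * t n (k+1) = ((-1 : MvPolynomial (Fin n) ℤ)^k * c) * g n (k+1)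
          - ((-1 : MvPolynomial (Fin n) ℤ)^k * c) * (g n (k+1) - (-1 : MvPolynomial (Fin n) ℤ)^k * t n (k+1)) := by
        have hsq : (-1 : MvPolynomial (Fin n) ℤ)^k * (-1 : MvPolynomial (Fin n) ℤ)^k = 1 := by
          rw [← pow_add]
          exact Even.neg_one_pow ⟨k, rfl⟩
        linear_combination (-(t n (k+1) * c)) * hsq
      rw [hid]
      apply Rep.sub
      · exact (Rep.gen (k := k+1) (i := k+1) (by rw [Finset.mem_Icc]; omega)).mul_left _
      · exact (hW.mono (k' := k+1) (by omega)).mul_left _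
    · rintro h
      obtain ⟨c, Q', rfl, hQ'⟩ := h.split
      apply Rep.add ((ih Q').mpr hQ' |>.mono (by omega))
      have hid : c * g n (k+1) = ((-1 : MvPolynomial (Fin n) ℤ)^k * c) * t n (k+1)
          + c * (g n (k+1) - (-1 : MvPolynomial (Fin n) ℤ)^k * t n (k+1)) := by ring
      rw [hid]
      apply Rep.add
      · exact (Rep.gen (k := k+1) (i := k+1) (by rw [Finset.mem_Icc]; omega)).mul_left _
      · have hWt : Rep n k (t n) (g n (k+1) - (-1 : MvPolynomial (Fin n) ℤ)^k * t n (k+1)) := by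
          have := g_sub_rep (n := n) (i := k+1) (by omega)
          simpa using this
        exact (hWt.mono (k' := k+1) (by omega)).mul_left _

section LexStuff
open AddMonoidAlgebra

lemma hadd_toLex : ∀ a b : Fin n →₀ ℕ, toLex (a + b) = toLex a + toLex b := fun _ _ => rfl

lemma lex_single_lt {u v : Fin n} {a b : ℕ} (huv : u < v) (ha : 0 < a) :
    toLex (Finsupp.single v b) < toLex (Finsupp.single u a) := by
  rw [Finsupp.Lex.lt_iff]
  refine ⟨u, fun j hj => ?_, ?_⟩
  · have hju : j ≠ u := ne_of_lt hj
    have hjv : j ≠ v := ne_of_lt (lt_trans hj huv)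
    simp [Finsupp.single_apply, hju.symm, hjv.symm]
  · have huv' : u ≠ v := ne_of_lt huv
    simp [Finsupp.single_apply, huv'.symm, ha]

lemma lex_zero_lt {u : Fin n} {a : ℕ} (ha : 0 < a) :
    toLex (0 : Fin n →₀ ℕ) < toLex (Finsupp.single u a) := by
  rw [Finsupp.Lex.lt_iff]
  refine ⟨u, fun j hj => ?_, ?_⟩
  · have hju : j ≠ u := ne_of_lt hj
    simp [Finsupp.single_apply, hju.symm]
  · simp [Finsupp.single_apply, ha]

lemma Y_eq {r : ℕ} (h : r < n) :
    Y n r = AddMonoidAlgebra.single (Finsupp.single (⟨r, h⟩ : Fin n) 2) (1 : ℤ) := by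
  rw [Y, dif_pos h, X_pow_eq_monomial]
  rfl

lemma Y_monic {r : ℕ} (h : r < n) : Monic toLex (Y n r) := by
  rw [Monic, Y_eq h, leadingCoeff_single toLex.injective]

lemma Y_supDegree {r : ℕ} (h : r < n) :
    supDegree toLex (Y n r) = toLex (Finsupp.single (⟨r, h⟩ : Fin n) 2) := by
  rw [Y_eq h, supDegree_single_ne_zero _ one_ne_zero]

theorem Hc_spec : ∀ (d r : ℕ) (h : r < n),
    Monic toLex (Hc n d r) ∧
    supDegree toLex (Hc n d r) = toLex (Finsupp.single (⟨r, h⟩ : Fin n) (2*d)) := by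
  intro d
  induction d with
  | zero =>
    intro r h
    rw [Hc_zero]
    constructor
    · exact monic_one toLex.injective
    · have : (1 : MvPolynomial (Fin n) ℤ) = AddMonoidAlgebra.single 0 (1 : ℤ) := rfl
      rw [this, supDegree_single_ne_zero _ one_ne_zero]
      simp
  | succ d ihd =>
    -- downward induction on r
    have main : ∀ (m r : ℕ) (h : r < n), n - r ≤ m + 1 →
        Monic toLex (Hc n (d+1) r) ∧
        supDegree toLex (Hc n (d+1) r) = toLex (Finsupp.single (⟨r, h⟩ : Fin n) (2*(d+1))) := by
      intro m
      induction m with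
      | zero =>
        intro r h hm
        have hr1 : ¬ (r + 1 < n) := by omega
        have hrec : Hc n (d+1) r = Y n r * Hc n d r := by
          rw [Hc, if_pos h, Hc_of_ge n hr1, zero_add]
        obtain ⟨hm1, hs1⟩ := ihd r h
        constructor
        · rw [hrec]; exact (Y_monic h).mul toLex.injective hadd_toLex hm1
        · rw [hrec, (Y_monic h).supDegree_mul_of_ne_zero_right toLex.injective hadd_toLex
            hm1.ne_zero, Y_supDegree h, hs1, ← hadd_toLex, ← Finsupp.single_add]
          congr 2
          omega
      | succ m ihm =>
        intro r h hm
        by_cases hr1 : r + 1 < n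
        · have hrec : Hc n (d+1) r = Hc n (d+1) (r+1) + Y n r * Hc n d r := by
            rw [Hc, if_pos h]
          obtain ⟨hm1, hs1⟩ := ihd r h
          obtain ⟨hm2, hs2⟩ := ihm (r+1) hr1 (by omega)
          have hsmul : supDegree toLex (Y n r * Hc n d r)
              = toLex (Finsupp.single (⟨r, h⟩ : Fin n) (2*(d+1))) := by
            rw [(Y_monic h).supDegree_mul_of_ne_zero_right toLex.injective hadd_toLex
              hm1.ne_zero, Y_supDegree h, hs1, ← hadd_toLex, ← Finsupp.single_add]
            congr 2
            omega
          have hlt : supDegree toLex (Hc n (d+1) (r+1)) < supDegree toLex (Y n r * Hc n d r) := by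
            rw [hs2, hsmul]
            exact lex_single_lt (by simp [Fin.lt_def]) (by omega)
          constructor
          · rw [hrec, Monic, leadingCoeff_add_eq_right hlt]
            exact (Y_monic h).mul toLex.injective hadd_toLex hm1
          · rw [hrec, supDegree_add_eq_right hlt, hsmul]
        · have hrec : Hc n (d+1) r = Y n r * Hc n d r := by
            rw [Hc, if_pos h, Hc_of_ge n hr1, zero_add]
          obtain ⟨hm1, hs1⟩ := ihd r h
          constructor
          · rw [hrec]; exact (Y_monic h).mul toLex.injective hadd_toLex hm1
          · rw [hrec, (Y_monic h).supDegree_mul_of_ne_zero_right toLex.injective hadd_toLex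
              hm1.ne_zero, Y_supDegree h, hs1, ← hadd_toLex, ← Finsupp.single_add]
            congr 2
            omega
    intro r h
    exact main (n - r) r h (by omega)

lemma g_monic {i : ℕ} (hi : 1 ≤ i) (hin : i ≤ n) : Monic toLex (g n i) := by
  have h : i - 1 < n := by omega
  exact (Hc_spec i (i-1) h).1

lemma g_supDegree {i : ℕ} (hi : 1 ≤ i) (hin : i ≤ n) (h : i - 1 < n) :
    supDegree toLex (g n i) = toLex (Finsupp.single (⟨i-1, h⟩ : Fin n) (2*i)) :=
  (Hc_spec i (i-1) h).2

end LexStuff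

section Extract
open AddMonoidAlgebra

lemma term_supDegree {i : ℕ} (h : i - 1 < n) (hi1 : 1 ≤ i) (hin : i ≤ n)
    {c : MvPolynomial (Fin n) ℤ} (hc : c ≠ 0) :
    supDegree toLex (c * g n i)
      = toLex (ofLex (supDegree toLex c) + Finsupp.single (⟨i-1, h⟩ : Fin n) (2*i)) := by
  rw [Monic.supDegree_mul_of_ne_zero_left toLex.injective hadd_toLex (g_monic hi1 hin) hc,
    g_supDegree hi1 hin h]
  rfl

lemma bot_eq_toLex_zero : (⊥ : Lex (Fin n →₀ ℕ)) = toLex (0 : Fin n →₀ ℕ) := rfl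

lemma extract (k : ℕ) (hk : k ≤ n) :
    ∀ (b : Lex (Fin n →₀ ℕ)) (N : ℕ) (c : ℕ → MvPolynomial (Fin n) ℤ)
      (Q : MvPolynomial (Fin n) ℤ),
      Q = ∑ i ∈ Finset.Icc 1 k, c i * g n i → Q ≠ 0 →
      (Finset.Icc 1 k).sup (fun i => supDegree toLex (c i * g n i)) = b →
      ((Finset.Icc 1 k).filter (fun i => supDegree toLex (c i * g n i) = b)).card = N →
      ∃ i ∈ Finset.Icc 1 k, ∃ (h : i - 1 < n),
        Finsupp.single (⟨i-1, h⟩ : Fin n) (2*i) ≤ ofLex (supDegree toLex Q) := by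
  intro b
  induction b using WellFoundedLT.induction with
  | _ b ihb =>
  intro N
  induction N using Nat.strong_induction_on with
  | _ N ihN =>
  intro c Q hQ hQ0 hsup hcard
  have hIccne : (Finset.Icc 1 k).Nonempty := by
    rcases (Finset.Icc 1 k).eq_empty_or_nonempty with h | h
    · exact absurd (by rw [hQ, h, Finset.sum_empty]) hQ0
    · exact h
  -- basic facts about members of Icc
  have hmem : ∀ i ∈ Finset.Icc 1 k, 1 ≤ i ∧ i ≤ n ∧ i - 1 < n := by
    intro i hi
    rw [Finset.mem_Icc] at hi
    exact ⟨hi.1, by omega, by omega⟩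
  by_cases hbbot : b = ⊥
  · exfalso
    apply hQ0
    rw [hQ]
    apply Finset.sum_eq_zero
    intro i hi
    obtain ⟨h1, h2, h3⟩ := hmem i hi
    by_contra hne
    have hci : c i ≠ 0 := fun h => hne (by rw [h, zero_mul])
    have hle : supDegree toLex (c i * g n i) ≤ b :=
      le_trans (Finset.le_sup (f := fun i => supDegree toLex (c i * g n i)) hi) (le_of_eq hsup)
    rw [term_supDegree h3 h1 h2 hci, hbbot, bot_eq_toLex_zero] at hle
    have hgt : toLex (0 : Fin n →₀ ℕ)
        < toLex (ofLex (supDegree toLex (c i)) + Finsupp.single (⟨i-1, h3⟩ : Fin n) (2*i)) := by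
      calc toLex (0 : Fin n →₀ ℕ) < toLex (Finsupp.single (⟨i-1, h3⟩ : Fin n) (2*i)) :=
            lex_zero_lt (by omega)
        _ ≤ _ := Finsupp.toLex_monotone (Finsupp.le_def.mpr (fun l => by
            simp only [Finsupp.add_apply]; omega))
    exact absurd (lt_of_lt_of_le hgt hle) (lt_irrefl _)
  -- b ≠ ⊥ : there is an attainer
  obtain ⟨i₀, hi₀, hi₀eq⟩ := Finset.exists_mem_eq_sup (Finset.Icc 1 k) hIccne
    (fun i => supDegree toLex (c i * g n i))
  rw [hsup] at hi₀eq
  have hattain : ∀ i, i ∈ Finset.Icc 1 k → supDegree toLex (c i * g n i) = b →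
      c i ≠ 0 ∧ ∃ (h : i - 1 < n),
        toLex (ofLex (supDegree toLex (c i)) + Finsupp.single (⟨i-1, h⟩ : Fin n) (2*i)) = b := by
    intro i hi hieq
    obtain ⟨h1, h2, h3⟩ := hmem i hi
    have hci : c i ≠ 0 := by
      intro h
      rw [h, zero_mul, supDegree_zero] at hieq
      exact hbbot hieq.symm
    refine ⟨hci, h3, ?_⟩
    rw [← term_supDegree h3 h1 h2 hci]
    exact hieq
  by_cases hQb : supDegree toLex Q = b
  · -- leading term of Q is the common top degree
    obtain ⟨hci, h3, heq⟩ := hattain i₀ hi₀ hi₀eq.symm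
    refine ⟨i₀, hi₀, h3, ?_⟩
    rw [hQb, ← heq]
    refine Finsupp.le_def.mpr fun l => ?_
    simp only [ofLex_toLex, Finsupp.add_apply]
    omega
  -- cancellation case : at least two attainers
  set S := (Finset.Icc 1 k).filter (fun i => supDegree toLex (c i * g n i) = b) with hS
  have hQle : supDegree toLex Q < b := by
    refine lt_of_le_of_ne ?_ hQb
    rw [hQ, ← hsup]
    exact supDegree_sum_le
  have hi₀S : i₀ ∈ S := Finset.mem_filter.mpr ⟨hi₀, hi₀eq.symm⟩
  have hcard2 : 1 < S.card := by
    rcases Nat.lt_or_ge S.card 2 with h | h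
    · exfalso
      have hS1 : S = {i₀} := by
        apply Finset.eq_singleton_iff_unique_mem.mpr
        refine ⟨hi₀S, fun j hj => ?_⟩
        by_contra hji
        have : 2 ≤ S.card := Finset.one_lt_card.mpr ⟨j, hj, i₀, hi₀S, hji⟩
        omega
      have hmax : ∀ j ∈ Finset.Icc 1 k, j ≠ i₀ →
          supDegree toLex (c j * g n j) < supDegree toLex (c i₀ * g n i₀) := by
        intro j hj hji
        rw [hi₀eq.symm]
        refine lt_of_le_of_ne (le_trans (Finset.le_sup (f := fun i => supDegree toLex (c i * g n i)) hj) (le_of_eq hsup)) ?_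
        intro hc
        exact hji (by
          have : j ∈ S := Finset.mem_filter.mpr ⟨hj, hc⟩
          rw [hS1] at this
          exact Finset.mem_singleton.mp this)
      have := (supDegree_leadingCoeff_sum_eq (D := toLex) hi₀ hmax).1
      rw [← hQ] at this
      exact hQb (this.trans hi₀eq.symm)
    · omega
  obtain ⟨i, hiS, j, hjS, hij⟩ := Finset.one_lt_card.mp hcard2
  have hiIcc : i ∈ Finset.Icc 1 k := (Finset.mem_filter.mp hiS).1
  have hjIcc : j ∈ Finset.Icc 1 k := (Finset.mem_filter.mp hjS).1
  obtain ⟨hci, hin', heqi⟩ := hattain i hiIcc (Finset.mem_filter.mp hiS).2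
  obtain ⟨hcj, hjn', heqj⟩ := hattain j hjIcc (Finset.mem_filter.mp hjS).2
  obtain ⟨hi1, hi2, -⟩ := hmem i hiIcc
  obtain ⟨hj1, hj2, -⟩ := hmem j hjIcc
  set ai := ofLex (supDegree toLex (c i)) with hai
  set aj := ofLex (supDegree toLex (c j)) with haj
  set si := Finsupp.single (⟨i-1, hin'⟩ : Fin n) (2*i) with hsi
  set sj := Finsupp.single (⟨j-1, hjn'⟩ : Fin n) (2*j) with hsj
  have heqij : ai + si = aj + sj := toLex.injective (heqi.trans heqj.symm)
  have hne : (⟨i-1, hin'⟩ : Fin n) ≠ (⟨j-1, hjn'⟩ : Fin n) := by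
    intro h
    rw [Fin.mk_eq_mk] at h
    omega
  have hsjai : sj ≤ ai := by
    refine Finsupp.le_def.mpr fun l => ?_
    by_cases hl : l = (⟨j-1, hjn'⟩ : Fin n)
    · subst hl
      have h5 := DFunLike.congr_fun heqij (⟨j-1, hjn'⟩ : Fin n)
      simp only [Finsupp.add_apply, hsi, hsj, Finsupp.single_eq_same,
        Finsupp.single_eq_of_ne' hne] at h5
      simp only [hsj, Finsupp.single_eq_same]
      omega
    · have h6 : sj l = 0 := by
        rw [hsj]; exact Finsupp.single_eq_of_ne' (Ne.symm hl)
      rw [h6]; omega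
  set m := ai - sj with hm
  have hmsj : m + sj = ai := tsub_add_cancel_of_le hsjai
  have hmsi : m + si = aj := by
    have h1 : (m + si) + sj = aj + sj := by
      rw [add_right_comm, hmsj, heqij]
    exact add_right_cancel h1
  set κ := leadingCoeff toLex (c i) with hκ
  have hκ0 : κ ≠ 0 := by
    rw [hκ]
    exact (leadingCoeff_ne_zero toLex.injective).mpr hci
  set T : MvPolynomial (Fin n) ℤ := AddMonoidAlgebra.single m κ with hT
  have hT0 : T ≠ 0 := by
    rw [hT]
    intro h
    exact hκ0 (AddMonoidAlgebra.single_eq_zero.mp h)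
  have hTsd : supDegree toLex T = toLex m := supDegree_single_ne_zero m hκ0
  have hTlc : leadingCoeff toLex T = κ := leadingCoeff_single toLex.injective m κ
  set c' : ℕ → MvPolynomial (Fin n) ℤ := fun l =>
    if l = i then c i - T * g n j else if l = j then c j + T * g n i else c l with hc'
  have hc'i : c' i = c i - T * g n j := by simp [hc']
  have hc'j : c' j = c j + T * g n i := by simp [hc', Ne.symm hij]
  have hc'other : ∀ l, l ≠ i → l ≠ j → c' l = c l := by
    intro l h1 h2; simp [hc', h1, h2]
  have hQ' : Q = ∑ l ∈ Finset.Icc 1 k, c' l * g n l := by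
    have hsubij : ({i, j} : Finset ℕ) ⊆ Finset.Icc 1 k := by
      intro l hl
      rcases Finset.mem_insert.mp hl with rfl | hl
      · exact hiIcc
      · rw [Finset.mem_singleton] at hl; subst hl; exact hjIcc
    have hz : ∀ l ∈ Finset.Icc 1 k, l ∉ ({i, j} : Finset ℕ) →
        c' l * g n l - c l * g n l = 0 := by
      intro l _ hl
      rw [Finset.mem_insert, Finset.mem_singleton] at hl
      push_neg at hl
      rw [hc'other l hl.1 hl.2, sub_self]
    have hdiff : ∑ l ∈ Finset.Icc 1 k, (c' l * g n l - c l * g n l) = 0 := by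
      rw [← Finset.sum_subset hsubij hz, Finset.sum_pair hij, hc'i, hc'j]
      ring
    have h3 : (∑ l ∈ Finset.Icc 1 k, c' l * g n l) - ∑ l ∈ Finset.Icc 1 k, c l * g n l = 0 := by
      rw [← Finset.sum_sub_distrib]; exact hdiff
    rw [hQ]
    exact (sub_eq_zero.mp h3).symm
  have hTgj : supDegree toLex (T * g n j) = supDegree toLex (c i) := by
    rw [Monic.supDegree_mul_of_ne_zero_left toLex.injective hadd_toLex (g_monic hj1 hj2) hT0,
      hTsd, g_supDegree hj1 hj2 hjn', ← hsj, ← hadd_toLex, hmsj]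
    rfl
  have hTgjlc : leadingCoeff toLex (T * g n j) = κ := by
    rw [Monic.leadingCoeff_mul_eq_left toLex.injective hadd_toLex (g_monic hj1 hj2), hTlc]
  have hsubi : supDegree toLex (c' i * g n i) < b := by
    rcases supDegree_sub_lt_of_leadingCoeff_eq toLex.injective hTgj.symm
        (show leadingCoeff toLex (c i) = leadingCoeff toLex (T * g n j) by
          rw [hTgjlc]) with hlt | heq0
    · by_cases hz : c' i = 0
      · rw [hz, zero_mul, supDegree_zero]
        exact lt_of_le_of_ne bot_le (Ne.symm hbbot)
      · rw [term_supDegree hin' hi1 hi2 hz, ← heqi, hadd_toLex, hadd_toLex]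
        apply add_lt_add_left
        have hgoal : supDegree toLex (c' i) < supDegree toLex (c i) := by
          rw [hc'i]; exact hlt
        exact hgoal
    · have hz : c' i = 0 := by rw [hc'i, heq0, sub_self]
      rw [hz, zero_mul, supDegree_zero]
      exact lt_of_le_of_ne bot_le (Ne.symm hbbot)
  have hTgi : supDegree toLex (T * g n i) = supDegree toLex (c j) := by
    rw [Monic.supDegree_mul_of_ne_zero_left toLex.injective hadd_toLex (g_monic hi1 hi2) hT0,
      hTsd, g_supDegree hi1 hi2 hin', ← hsi, ← hadd_toLex, hmsi]
    rfl
  have hsubj : supDegree toLex (c' j * g n j) ≤ b := by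
    by_cases hz : c' j = 0
    · rw [hz, zero_mul, supDegree_zero]
      exact bot_le
    · rw [term_supDegree hjn' hj1 hj2 hz, ← heqj, hadd_toLex, hadd_toLex]
      apply add_le_add_left
      have hgoal : supDegree toLex (c' j) ≤ supDegree toLex (c j) := by
        rw [hc'j]
        refine supDegree_add_le.trans ?_
        rw [hTgi, sup_idem]
      exact hgoal
  have hother : ∀ l ∈ Finset.Icc 1 k, l ≠ i → l ≠ j →
      supDegree toLex (c' l * g n l) ≤ b := by
    intro l hl h1 h2
    rw [hc'other l h1 h2]
    exact le_trans (Finset.le_sup (f := fun l => supDegree toLex (c l * g n l)) hl)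
      (le_of_eq hsup)
  have hb'le : (Finset.Icc 1 k).sup (fun l => supDegree toLex (c' l * g n l)) ≤ b := by
    refine Finset.sup_le fun l hl => ?_
    by_cases h1 : l = i
    · subst h1; exact le_of_lt hsubi
    by_cases h2 : l = j
    · subst h2; exact hsubj
    exact hother l hl h1 h2
  rcases lt_or_eq_of_le hb'le with hblt | hbeq
  · exact ihb _ hblt _ c' Q hQ' hQ0 rfl rfl
  · -- the number of attainers dropped
    have hsub2 : (Finset.Icc 1 k).filter (fun l => supDegree toLex (c' l * g n l) = b)
        ⊆ S.erase i := by
      intro l hl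
      rw [Finset.mem_filter] at hl
      rw [Finset.mem_erase]
      by_cases h1 : l = i
      · exact absurd (h1 ▸ hl.2) (ne_of_lt hsubi)
      refine ⟨h1, ?_⟩
      by_cases h2 : l = j
      · exact h2 ▸ hjS
      · rw [hS, Finset.mem_filter]
        exact ⟨hl.1, by rw [← hc'other l h1 h2]; exact hl.2⟩
    have hcard' : ((Finset.Icc 1 k).filter
        (fun l => supDegree toLex (c' l * g n l) = b)).card < N := by
      calc ((Finset.Icc 1 k).filter (fun l => supDegree toLex (c' l * g n l) = b)).card
          ≤ (S.erase i).card := Finset.card_le_card hsub2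
        _ < S.card := Finset.card_erase_lt_of_mem hiS
        _ = N := hcard
    exact ihN _ hcard' c' Q hQ' hQ0 hbeq rfl

end Extract

section Key
open AddMonoidAlgebra

lemma C_eq_single (M : ℤ) :
    (C M : MvPolynomial (Fin n) ℤ) = AddMonoidAlgebra.single (0 : Fin n →₀ ℕ) M := by
  rw [C_apply, ← single_eq_monomial]

lemma supDegree_C_mul {M : ℤ} (hM : M ≠ 0) (Q : MvPolynomial (Fin n) ℤ) (hQ : Q ≠ 0) :
    supDegree toLex ((C M : MvPolynomial (Fin n) ℤ) * Q) = supDegree toLex Q := by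
  have hlc : leadingCoeff toLex (C M : MvPolynomial (Fin n) ℤ) * leadingCoeff toLex Q ≠ 0 := by
    rw [C_eq_single, leadingCoeff_single toLex.injective]
    exact mul_ne_zero hM ((leadingCoeff_ne_zero toLex.injective).mpr hQ)
  rw [supDegree_mul toLex.injective hadd_toLex hlc (by
      rw [C_eq_single]
      intro h
      exact hM (AddMonoidAlgebra.single_eq_zero.mp h)) hQ]
  rw [C_eq_single, supDegree_single_ne_zero _ hM]
  exact zero_add _

lemma key (k : ℕ) (hk : k ≤ n) (M : ℤ) (hM : M ≠ 0) :
    ∀ (b : Lex (Fin n →₀ ℕ)) (Q : MvPolynomial (Fin n) ℤ), supDegree toLex Q = b →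
      Rep n k (t n) ((C M : MvPolynomial (Fin n) ℤ) * Q) → Rep n k (t n) Q := by
  intro b
  induction b using WellFoundedLT.induction with
  | _ b ihb =>
  intro Q hb h
  by_cases hQ0 : Q = 0
  · rw [hQ0]; exact Rep.zero
  have hMQ0 : (C M : MvPolynomial (Fin n) ℤ) * Q ≠ 0 := by
    apply mul_ne_zero _ hQ0
    rw [C_eq_single]
    intro hc
    exact hM (AddMonoidAlgebra.single_eq_zero.mp hc)
  -- pass to the g-representation and extract a dividing leading monomial
  obtain ⟨c, hc⟩ := (rep_t_iff_rep_g k _).mp h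
  obtain ⟨i, hi, hin', hle⟩ := extract k hk _ _ c _ hc hMQ0 rfl rfl
  rw [supDegree_C_mul hM Q hQ0] at hle
  rw [Finset.mem_Icc] at hi
  have hi1 : 1 ≤ i := hi.1
  have hi2 : i ≤ n := by omega
  set δ := ofLex (supDegree toLex Q) with hδ
  set si := Finsupp.single (⟨i-1, hin'⟩ : Fin n) (2*i) with hsi
  set T : MvPolynomial (Fin n) ℤ :=
    AddMonoidAlgebra.single (δ - si) (leadingCoeff toLex Q) with hT
  set q : MvPolynomial (Fin n) ℤ := T * g n i with hq
  have hlc0 : leadingCoeff toLex Q ≠ 0 := (leadingCoeff_ne_zero toLex.injective).mpr hQ0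
  have hs0 : T ≠ (0 : MvPolynomial (Fin n) ℤ) := by
    rw [hT]
    intro hc0
    exact hlc0 (AddMonoidAlgebra.single_eq_zero.mp hc0)
  have hqsd : supDegree toLex Q = supDegree toLex q := by
    rw [hq, Monic.supDegree_mul_of_ne_zero_left toLex.injective hadd_toLex
      (g_monic hi1 hi2) hs0, hT, supDegree_single_ne_zero _ hlc0, g_supDegree hi1 hi2 hin',
      ← hsi, ← hadd_toLex, tsub_add_cancel_of_le hle]
    exact (toLex_ofLex _).symm
  have hqlc : leadingCoeff toLex Q = leadingCoeff toLex q := by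
    rw [hq, Monic.leadingCoeff_mul_eq_left toLex.injective hadd_toLex (g_monic hi1 hi2),
      hT, leadingCoeff_single toLex.injective]
  have hqrep : Rep n k (t n) q :=
    ((rep_t_iff_rep_g k _).mpr (Rep.gen (Finset.mem_Icc.mpr hi))).mul_left _
  rcases supDegree_sub_lt_of_leadingCoeff_eq toLex.injective hqsd hqlc with hlt | heq
  · have hrep' : Rep n k (t n) ((C M : MvPolynomial (Fin n) ℤ) * (Q - q)) := by
      have : (C M : MvPolynomial (Fin n) ℤ) * (Q - q)
          = (C M : MvPolynomial (Fin n) ℤ) * Q - (C M : MvPolynomial (Fin n) ℤ) * q := by ring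
      rw [this]
      exact h.sub (hqrep.mul_left _)
    have hQ' := ihb _ (hb ▸ hlt) (Q - q) rfl hrep'
    have : Q = (Q - q) + q := by ring
    rw [this]
    exact hQ'.add hqrep
  · rw [heq]
    exact hqrep

end Key

end Aux

theorem stmt0 (n : ℕ) (hn : 1 ≤ n) (d : ℕ) (hd : 2 ≤ d)
    (d₀ : ℕ) (hd₀ : d₀ = min (2 * n) d)
    (M : ℕ) (hM : 0 < M)
    (f : ℕ → MvPolynomial (Fin n) ℤ)
    (hf : ∀ i ∈ Finset.Icc 1 (d₀ / 2), (f i).IsHomogeneous (d - 2 * i))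
    (P : MvPolynomial (Fin n) ℤ)
    (hP : P = ∑ i ∈ Finset.Icc 1 (d₀ / 2), f i * t n i)
    (hdvd : (C (M : ℤ) : MvPolynomial (Fin n) ℤ) ∣ P) :
    ∃ fhat : ℕ → MvPolynomial (Fin n) ℤ,
      (∑ i ∈ Finset.Icc 1 (d₀ / 2), fhat i * t n i = P) ∧
      ∀ i ∈ Finset.Icc 1 (d₀ / 2), (C (M : ℤ) : MvPolynomial (Fin n) ℤ) ∣ fhat i := by
  set k := d₀ / 2 with hk
  have hkn : k ≤ n := by omega
  obtain ⟨Q, hQ⟩ := hdvd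
  have hrep : Aux.Rep n k (t n) ((C (M : ℤ) : MvPolynomial (Fin n) ℤ) * Q) := by
    rw [← hQ, hP]; exact ⟨f, rfl⟩
  have hMne : ((M : ℤ)) ≠ 0 := by exact_mod_cast hM.ne'
  obtain ⟨h, hh⟩ := Aux.key k hkn (M : ℤ) hMne _ Q rfl hrep
  refine ⟨fun i => (C (M : ℤ) : MvPolynomial (Fin n) ℤ) * h i, ?_, ?_⟩
  · rw [hQ, hh, Finset.mul_sum]
    apply Finset.sum_congr rfl
    intros
    ring
  · intro i _
    exact Dvd.intro (h i) rfl
end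

section
/- Let n ≥ 1, let d ≥ 2 and let M be a positive integer. If P ∈ K is homogeneous of degree d and every coefficient of P is divisible by M, then P ∈ M·K; equivalently, the polynomial P/M again lies in the ideal K. -/
open MvPolynomial Finset

/-- `K n` is the ideal of `ℤ[x_1, …, x_n]` generated by `t_1, …, t_n`. -/
noncomputable def K (n : ℕ) : Ideal (MvPolynomial (Fin n) ℤ) :=
  Ideal.span ((fun i => t n i) '' (Set.Icc 1 n))

namespace StmtAux


/-- `Nice v e` says `S` is a free module over `ℤ[v]` with basis `e`, in the concrete
sense of existence and uniqueness of representations. -/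
def Nice {S : Type*} [CommRing S] {m : ℕ} (v : Fin m → S) {ι : Type*} [Fintype ι]
    (e : ι → S) : Prop :=
  (∀ s : S, ∃ c : ι → MvPolynomial (Fin m) ℤ, s = ∑ k, aeval v (c k) * e k) ∧
  (∀ c : ι → MvPolynomial (Fin m) ℤ, ∑ k, aeval v (c k) * e k = 0 → ∀ k, c k = 0)

/-- Powers `1, X, …, X^(N-1)` are linearly independent over `R[g]` for `g` of degree `N`
with unit leading coefficient. -/
lemma monic_indep {R : Type*} [CommRing R] [IsDomain R] (g : Polynomial R) (N : ℕ)
    (hg : g.natDegree = N) (hN : 0 < N) (hu : IsUnit g.leadingCoeff)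
    (c : Fin N → Polynomial R)
    (h : ∑ j, (c j).comp g * Polynomial.X ^ (j : ℕ) = 0) : ∀ j, c j = 0 := by
  by_contra hc
  push_neg at hc
  obtain ⟨j₁, hj₁⟩ := hc
  classical
  set s : Finset (Fin N) := Finset.univ.filter (fun j => c j ≠ 0) with hs
  have hsne : s.Nonempty := ⟨j₁, by simp [hs, hj₁]⟩
  obtain ⟨j₀, hj₀s, hj₀max⟩ := s.exists_max_image (fun j => N * (c j).natDegree + (j : ℕ)) hsne
  have hj₀ : c j₀ ≠ 0 := by simpa [hs] using hj₀s
  set D : ℕ := N * (c j₀).natDegree + (j₀ : ℕ) with hD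
  have hdeg : ∀ j : Fin N, c j ≠ 0 → ((c j).comp g).natDegree = N * (c j).natDegree := by
    intro j _
    rw [Polynomial.natDegree_comp, hg, mul_comm]
  have hcoeff : ∀ j : Fin N, ((c j).comp g * Polynomial.X ^ (j : ℕ)).coeff D =
      if j = j₀ then ((c j₀).comp g).leadingCoeff else 0 := by
    intro j
    by_cases hj : c j = 0
    · have hjj : j ≠ j₀ := fun h' => hj₀ (h' ▸ hj)
      simp [hj, hjj]
    · have hjs : j ∈ s := by simp [hs, hj]
      have hle : N * (c j).natDegree + (j : ℕ) ≤ D := hj₀max j hjs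
      rcases eq_or_lt_of_le hle with heq | hlt
      · -- degrees equal forces j = j₀
        have hmod : (j : ℕ) = (j₀ : ℕ) := by
          calc (j : ℕ) = (j : ℕ) % N := (Nat.mod_eq_of_lt j.isLt).symm
            _ = (N * (c j).natDegree + (j : ℕ)) % N := (Nat.mul_add_mod _ _ _).symm
            _ = (N * (c j₀).natDegree + (j₀ : ℕ)) % N := by rw [heq, hD]
            _ = (j₀ : ℕ) % N := Nat.mul_add_mod _ _ _
            _ = (j₀ : ℕ) := Nat.mod_eq_of_lt j₀.isLt
        have hjj : j = j₀ := Fin.ext hmod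
        subst hjj
        have hDj : D - (j : ℕ) = ((c j).comp g).natDegree := by
          rw [hdeg j hj]; omega
        rw [Polynomial.coeff_mul_X_pow', if_pos (by omega : (j : ℕ) ≤ D), hDj,
          Polynomial.coeff_natDegree, if_pos rfl]
      · have hjj : j ≠ j₀ := by
          intro h'; subst h'; omega
        rw [Polynomial.coeff_mul_X_pow', if_neg hjj]
        by_cases hjD : (j : ℕ) ≤ D
        · rw [if_pos hjD]
          apply Polynomial.coeff_eq_zero_of_natDegree_lt
          rw [hdeg j hj]; omega
        · rw [if_neg hjD]
  have hzero : (0 : Polynomial R).coeff D = 0 := by simp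
  rw [← h] at hzero
  rw [Polynomial.finset_sum_coeff] at hzero
  simp_rw [hcoeff] at hzero
  rw [Finset.sum_ite_eq' Finset.univ j₀] at hzero
  simp only [Finset.mem_univ, if_pos] at hzero
  have hlc : ((c j₀).comp g).leadingCoeff ≠ 0 := by
    rw [Polynomial.leadingCoeff_comp (by omega : g.natDegree ≠ 0)]
    apply mul_ne_zero
    · exact Polynomial.leadingCoeff_ne_zero.mpr hj₀
    · exact (hu.pow _).ne_zero
  exact hlc hzero



/-- `yy m 0 = 1`, `yy m (j+1) = X j` for `j < m`, else `0`. -/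
noncomputable def yy (m : ℕ) : ℕ → MvPolynomial (Fin m) ℤ
  | 0 => 1
  | (j+1) => if h : j < m then X ⟨j, h⟩ else 0

/-- The generic images of `t`-generators after splitting off one variable. -/
noncomputable def W (m : ℕ) (i : Fin (m+1)) : Polynomial (MvPolynomial (Fin m) ℤ) :=
  Polynomial.C (yy m ((i : ℕ)+1)) + Polynomial.X^2 * Polynomial.C (yy m (i : ℕ))

/-- `E m j` expresses `C (yy m j)` in terms of the `W`'s; alternating expansion. -/
noncomputable def E (m : ℕ) : ℕ → Polynomial (MvPolynomial (Fin m) ℤ)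
  | 0 => 1
  | (j+1) => Polynomial.C (yy m (j+1)) - Polynomial.X^2 * E m j

lemma E_add (m j : ℕ) :
    E m (j+1) + Polynomial.X^2 * E m j = Polynomial.C (yy m (j+1)) := by
  rw [E]; ring

lemma E_spec (m : ℕ) : ∀ j, (E m j).natDegree = 2*j ∧ (E m j).leadingCoeff = (-1)^j := by
  intro j
  induction j with
  | zero => simp [E]
  | succ j ih =>
    obtain ⟨hd, hl⟩ := ih
    have hE0 : E m j ≠ 0 := by
      intro h
      have h1 : ((-1 : MvPolynomial (Fin m) ℤ))^j = 0 := by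
        rw [← hl, h, Polynomial.leadingCoeff_zero]
      exact pow_ne_zero j (neg_ne_zero.mpr one_ne_zero) h1
    set q : Polynomial (MvPolynomial (Fin m) ℤ) := Polynomial.X^2 * E m j with hq
    have hq0 : q ≠ 0 := mul_ne_zero (pow_ne_zero _ Polynomial.X_ne_zero) hE0
    have hqd : q.natDegree = 2*j + 2 := by
      rw [hq, Polynomial.natDegree_mul (pow_ne_zero _ Polynomial.X_ne_zero) hE0,
        Polynomial.natDegree_X_pow, hd]; ring
    have hql : q.leadingCoeff = (-1)^j := by
      rw [hq, Polynomial.leadingCoeff_mul, Polynomial.leadingCoeff_X_pow, one_mul, hl]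
    have hEeq : E m (j+1) = Polynomial.C (yy m (j+1)) + (-q) := by
      rw [E]; ring
    have hdlt : (Polynomial.C (yy m (j+1))).degree < (-q).degree := by
      rw [Polynomial.degree_neg, Polynomial.degree_eq_natDegree hq0, hqd]
      refine lt_of_le_of_lt Polynomial.degree_C_le ?_
      exact_mod_cast (by omega : 0 < 2*j+2)
    constructor
    · rw [hEeq, add_comm]
      rw [Polynomial.natDegree_add_eq_left_of_degree_lt hdlt, Polynomial.natDegree_neg, hqd]
      ring
    · rw [hEeq, add_comm, Polynomial.leadingCoeff_add_of_degree_lt' ?_]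
      · rw [Polynomial.leadingCoeff_neg, hql]; ring
      · exact hdlt

/-- The substitution `X i ↦ W (i.castSucc)`, `X ↦ X`: a ring endomorphism of
`(ℤ[Fin m])[X]` (triangular, hence invertible). -/
noncomputable def sig (m : ℕ) : Polynomial (MvPolynomial (Fin m) ℤ) →ₐ[ℤ]
    Polynomial (MvPolynomial (Fin m) ℤ) :=
  Polynomial.aevalTower (MvPolynomial.aeval (fun i : Fin m => W m i.castSucc)) Polynomial.X

/-- The inverse substitution `X i ↦ E m (i+1)`, `X ↦ X`. -/
noncomputable def sig' (m : ℕ) : Polynomial (MvPolynomial (Fin m) ℤ) →ₐ[ℤ]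
    Polynomial (MvPolynomial (Fin m) ℤ) :=
  Polynomial.aevalTower (MvPolynomial.aeval (fun i : Fin m => E m ((i : ℕ)+1))) Polynomial.X

@[simp] lemma sig_X (m : ℕ) : sig m Polynomial.X = Polynomial.X :=
  Polynomial.aevalTower_X _ _

@[simp] lemma sig'_X (m : ℕ) : sig' m Polynomial.X = Polynomial.X :=
  Polynomial.aevalTower_X _ _

lemma sig_C (m : ℕ) (p : MvPolynomial (Fin m) ℤ) :
    sig m (Polynomial.C p) = MvPolynomial.aeval (fun i : Fin m => W m i.castSucc) p :=
  Polynomial.aevalTower_C _ _ _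

lemma sig'_C (m : ℕ) (p : MvPolynomial (Fin m) ℤ) :
    sig' m (Polynomial.C p) = MvPolynomial.aeval (fun i : Fin m => E m ((i : ℕ)+1)) p :=
  Polynomial.aevalTower_C _ _ _

lemma aeval_E_yy (m : ℕ) : ∀ j, j ≤ m →
    MvPolynomial.aeval (fun i : Fin m => E m ((i : ℕ)+1)) (yy m j) = E m j := by
  intro j hj
  match j with
  | 0 => simp [yy, E]
  | (j+1) =>
    have hjm : j < m := by omega
    rw [yy, dif_pos hjm, MvPolynomial.aeval_X]

lemma sig'_sig (m : ℕ) (p : Polynomial (MvPolynomial (Fin m) ℤ)) :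
    sig' m (sig m p) = p := by
  have key : ∀ q : MvPolynomial (Fin m) ℤ, sig' m (sig m (Polynomial.C q)) = Polynomial.C q := by
    intro q
    induction q using MvPolynomial.induction_on with
    | C r =>
      have h0 : (Polynomial.C (MvPolynomial.C r : MvPolynomial (Fin m) ℤ) :
          Polynomial (MvPolynomial (Fin m) ℤ)) = (r : Polynomial (MvPolynomial (Fin m) ℤ)) := by
        have : (MvPolynomial.C r : MvPolynomial (Fin m) ℤ) = (r : MvPolynomial (Fin m) ℤ) := by
          simp [MvPolynomial.C_eq_smul_one, zsmul_eq_mul]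
        rw [this, Polynomial.C_eq_intCast]
      rw [h0, map_intCast, map_intCast]
    | add p q hp hq => rw [map_add, map_add, map_add, hp, hq]
    | mul_X p i hp =>
      rw [map_mul, map_mul, map_mul, hp]
      congr 1
      rw [sig_C, MvPolynomial.aeval_X, W]
      have hcast : ((i.castSucc : Fin (m+1)) : ℕ) = (i : ℕ) := rfl
      rw [hcast, map_add, map_mul, map_pow, sig'_X, sig'_C, sig'_C]
      have h1 : MvPolynomial.aeval (fun i : Fin m => E m ((i : ℕ)+1)) (yy m ((i : ℕ)+1))
          = E m ((i : ℕ)+1) := aeval_E_yy m _ (by omega)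
      have h2 : MvPolynomial.aeval (fun i : Fin m => E m ((i : ℕ)+1)) (yy m (i : ℕ))
          = E m (i : ℕ) := aeval_E_yy m _ (by omega)
      rw [h1, h2, E_add]
      have : yy m ((i : ℕ)+1) = X i := by rw [yy, dif_pos i.isLt]
      rw [this]
  induction p using Polynomial.induction_on with
  | C q => exact key q
  | add p q hp hq => rw [map_add, map_add, hp, hq]
  | monomial d q ih =>
    rw [map_mul, map_mul, map_pow, map_pow, sig_X, sig'_X, key]

lemma sig_injective (m : ℕ) : Function.Injective (sig m) := by
  intro a b hab
  have := congrArg (sig' m) hab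
  rwa [sig'_sig, sig'_sig] at this


lemma E_ne_zero (m j : ℕ) : E m j ≠ 0 := by
  intro h
  have h1 := (E_spec m j).2
  rw [h, Polynomial.leadingCoeff_zero] at h1
  exact pow_ne_zero j (neg_ne_zero.mpr one_ne_zero) h1.symm

/-- Generic variables with the last one replaced by the monic polynomial `g`. -/
noncomputable def W2 (m : ℕ) (i : Fin (m+1)) : Polynomial (MvPolynomial (Fin m) ℤ) :=
  if h : (i : ℕ) < m then Polynomial.C (X ⟨(i : ℕ), h⟩) else Polynomial.X^2 * E m m

lemma sig_E (m : ℕ) : ∀ j, j ≤ m → sig m (E m j) = Polynomial.C (yy m j) := by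
  intro j
  induction j with
  | zero => intro _; simp [E, yy]
  | succ j ih =>
    intro hj
    rw [E, map_sub, map_mul, map_pow, sig_X, sig_C]
    have hy : yy m (j+1) = X (⟨j, by omega⟩ : Fin m) := by rw [yy, dif_pos]
    rw [hy, MvPolynomial.aeval_X, ih (by omega), W]
    have hv : (((⟨j, by omega⟩ : Fin m).castSucc : Fin (m+1)) : ℕ) = j := rfl
    rw [hv, hy]
    ring

lemma sig_W2 (m : ℕ) (i : Fin (m+1)) : sig m (W2 m i) = W m i := by
  by_cases h : (i : ℕ) < m
  · rw [W2, dif_pos h, sig_C, MvPolynomial.aeval_X]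
    have hv : (⟨(i : ℕ), h⟩ : Fin m).castSucc = i := by
      ext; rfl
    rw [hv]
  · rw [W2, dif_neg h, map_mul, map_pow, sig_X, sig_E m m le_rfl, W]
    have him : (i : ℕ) = m := by omega
    rw [him]
    have h0 : yy m (m+1) = 0 := by rw [yy, dif_neg (lt_irrefl m)]
    rw [h0, map_zero, zero_add]

lemma aeval_W_eq_sig (m : ℕ) (p : MvPolynomial (Fin (m+1)) ℤ) :
    MvPolynomial.aeval (W m) p = sig m (MvPolynomial.aeval (W2 m) p) := by
  have h : (MvPolynomial.aeval (W m) : MvPolynomial (Fin (m+1)) ℤ →ₐ[ℤ] _)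
      = (sig m).comp (MvPolynomial.aeval (W2 m)) := by
    apply MvPolynomial.algHom_ext
    intro i
    simp [sig_W2]
  rw [h]
  rfl

/-- The isomorphism `ℤ[Fin (m+1)] ≃ (ℤ[Fin m])[X]` sending the *last* variable to `X`. -/
noncomputable def psi (m : ℕ) :
    MvPolynomial (Fin (m+1)) ℤ ≃ₐ[ℤ] Polynomial (MvPolynomial (Fin m) ℤ) :=
  (MvPolynomial.renameEquiv ℤ (finRotate (m+1))).trans (MvPolynomial.finSuccEquiv ℤ m)

noncomputable def gg (m : ℕ) : Polynomial (MvPolynomial (Fin m) ℤ) := Polynomial.X^2 * E m m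

lemma psi_X_comp (m : ℕ) (i : Fin (m+1)) : (psi m (X i)).comp (gg m) = W2 m i := by
  have hpsiX : (psi m) (X i) = MvPolynomial.finSuccEquiv ℤ m (X (finRotate (m+1) i)) := by
    rw [psi, AlgEquiv.trans_apply, MvPolynomial.renameEquiv_apply, MvPolynomial.rename_X]
  by_cases h : (i : ℕ) < m
  · have hlt : i < Fin.last m := by
      rw [Fin.lt_iff_val_lt_val, Fin.val_last]; exact h
    have hrot : finRotate (m+1) i = (⟨(i : ℕ), h⟩ : Fin m).succ := by
      ext
      rw [finRotate_succ_apply, Fin.val_add_one_of_lt hlt]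
      rfl
    rw [hpsiX, hrot, MvPolynomial.finSuccEquiv_X_succ, W2, dif_pos h, Polynomial.C_comp]
  · have him : i = Fin.last m := by
      ext
      have := i.isLt
      simp only [Fin.val_last]
      omega
    have hrot : finRotate (m+1) i = 0 := by rw [him, finRotate_last]
    rw [hpsiX, hrot, MvPolynomial.finSuccEquiv_X_zero, W2, dif_neg h, Polynomial.X_comp, gg]

lemma comp_g_psi (m : ℕ) (p : MvPolynomial (Fin (m+1)) ℤ) :
    MvPolynomial.aeval (W2 m) p = (psi m p).comp (gg m) := by
  induction p using MvPolynomial.induction_on with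
  | C r =>
    have h1 : (MvPolynomial.C r : MvPolynomial (Fin (m+1)) ℤ)
        = (r : MvPolynomial (Fin (m+1)) ℤ) := by
      simp [MvPolynomial.C_eq_smul_one, zsmul_eq_mul]
    rw [h1, map_intCast, map_intCast]
    have h2 : ((r : ℤ) : Polynomial (MvPolynomial (Fin m) ℤ))
        = Polynomial.C ((r : ℤ) : MvPolynomial (Fin m) ℤ) := by
      rw [Polynomial.C_eq_intCast]
    rw [h2, Polynomial.C_comp]
  | add p q hp hq => rw [map_add, map_add, Polynomial.add_comp, hp, hq]
  | mul_X p i hp =>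
    rw [map_mul, map_mul, Polynomial.mul_comp, hp, MvPolynomial.aeval_X, psi_X_comp]

lemma generic_indep (m : ℕ) (c : Fin (2*(m+1)) → MvPolynomial (Fin (m+1)) ℤ)
    (h : ∑ j, MvPolynomial.aeval (W m) (c j) * Polynomial.X ^ (j : ℕ) = 0) :
    ∀ j, c j = 0 := by
  have h2 : sig m (∑ j, MvPolynomial.aeval (W2 m) (c j) * Polynomial.X ^ (j : ℕ)) = 0 := by
    rw [map_sum]
    simp_rw [map_mul, map_pow, sig_X, ← aeval_W_eq_sig]
    exact h
  rw [← map_zero (sig m)] at h2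
  have h3 := sig_injective m h2
  simp_rw [comp_g_psi] at h3
  have hE := E_spec m m
  have hgdeg : (gg m).natDegree = 2*(m+1) := by
    rw [gg, Polynomial.natDegree_mul (pow_ne_zero _ Polynomial.X_ne_zero) (E_ne_zero m m),
      Polynomial.natDegree_X_pow, hE.1]
    ring
  have hu : IsUnit (gg m).leadingCoeff := by
    rw [gg, Polynomial.leadingCoeff_mul, Polynomial.leadingCoeff_X_pow, one_mul, hE.2]
    exact isUnit_one.neg.pow m
  have h4 := monic_indep (gg m) (2*(m+1)) hgdeg (by omega) hu (fun j => psi m (c j)) h3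
  intro j
  apply (psi m).injective
  rw [map_zero]
  exact h4 j


section Step

variable {S : Type*} [CommRing S] {m : ℕ} (v : Fin m → S) {ι : Type*} [Fintype ι] (e : ι → S)

/-- `vvS v j` = value of `yy m j` under `v`: `1, v 0, …, v (m-1), 0, 0, …`. -/
noncomputable def vvS (j : ℕ) : S := MvPolynomial.aeval v (yy m j)

/-- The new generator family in `S[X]`. -/
noncomputable def v' : Fin (m+1) → Polynomial S := fun i =>
  Polynomial.C (vvS v ((i : ℕ)+1)) + Polynomial.X^2 * Polynomial.C (vvS v (i : ℕ))

/-- The new basis family in `S[X]`. -/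
noncomputable def e' : ι × Fin (2*(m+1)) → Polynomial S := fun k =>
  Polynomial.C (e k.1) * Polynomial.X^((k.2 : ℕ))

lemma vvS_zero : vvS v 0 = 1 := by simp [vvS, yy]

lemma vvS_succ_eq (i : Fin m) : vvS v ((i : ℕ)+1) = v i := by
  rw [vvS, yy, dif_pos i.isLt]
  simp

lemma vvS_eq_zero (j : ℕ) (hj : m < j) : vvS v j = 0 := by
  match j, hj with
  | (j+1), hj =>
    rw [vvS, yy, dif_neg (by omega)]
    simp

lemma bridge (p : MvPolynomial (Fin (m+1)) ℤ) :
    MvPolynomial.aeval (v' v) p =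
      Polynomial.mapAlgHom (MvPolynomial.aeval v : MvPolynomial (Fin m) ℤ →ₐ[ℤ] S)
        (MvPolynomial.aeval (W m) p) := by
  have h : (MvPolynomial.aeval (v' v) : MvPolynomial (Fin (m+1)) ℤ →ₐ[ℤ] Polynomial S)
      = (Polynomial.mapAlgHom (MvPolynomial.aeval v : MvPolynomial (Fin m) ℤ →ₐ[ℤ] S)).comp
          (MvPolynomial.aeval (W m)) := by
    apply MvPolynomial.algHom_ext
    intro i
    rw [MvPolynomial.aeval_X, AlgHom.comp_apply, MvPolynomial.aeval_X, W]
    simp only [Polynomial.mapAlgHom, AlgHom.coe_mk, RingHom.coe_coe,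
      Polynomial.coe_mapRingHom]
    rw [Polynomial.map_add, Polynomial.map_mul, Polynomial.map_pow, Polynomial.map_C,
      Polynomial.map_C, Polynomial.map_X, v']
    rfl
  rw [h]
  rfl

lemma step_indep (h : Nice v e) (c : ι × Fin (2*(m+1)) → MvPolynomial (Fin (m+1)) ℤ)
    (hsum : ∑ k, MvPolynomial.aeval (v' v) (c k) * e' e k = 0) : ∀ k, c k = 0 := by
  classical
  set Φ := Polynomial.mapAlgHom (MvPolynomial.aeval v : MvPolynomial (Fin m) ℤ →ₐ[ℤ] S) with hΦ
  set G : ι → Polynomial (MvPolynomial (Fin m) ℤ) := fun k =>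
    ∑ j : Fin (2*(m+1)), MvPolynomial.aeval (W m) (c (k, j)) * Polynomial.X^((j : ℕ)) with hG
  have hsum2 : ∑ k : ι, Φ (G k) * Polynomial.C (e k) = 0 := by
    rw [← hsum, Fintype.sum_prod_type]
    apply Finset.sum_congr rfl
    intro k _
    rw [hG, map_sum, Finset.sum_mul]
    apply Finset.sum_congr rfl
    intro j _
    rw [map_mul, map_pow, ← bridge]
    have hX : Φ Polynomial.X = Polynomial.X := Polynomial.map_X _
    rw [hX]
    simp only [e']
    ring
  have hGzero : ∀ k, G k = 0 := by
    intro k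
    apply Polynomial.ext
    intro d
    have hco := congrArg (fun q => Polynomial.coeff q d) hsum2
    simp only [Polynomial.finset_sum_coeff, Polynomial.coeff_zero] at hco
    have hterm : ∀ k : ι, (Φ (G k) * Polynomial.C (e k)).coeff d =
        MvPolynomial.aeval v ((G k).coeff d) * e k := by
      intro k
      rw [Polynomial.coeff_mul_C]
      congr 1
      rw [hΦ]
      simp only [Polynomial.mapAlgHom, AlgHom.coe_mk, RingHom.coe_coe,
        Polynomial.coe_mapRingHom]
      rw [Polynomial.coeff_map]
      rfl
    simp only [hterm] at hco
    have := h.2 (fun k => (G k).coeff d) hco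
    rw [Polynomial.coeff_zero]
    exact this k
  intro k
  have hg := generic_indep m (fun j => c (k.1, j)) (by simpa [hG] using hGzero k.1)
  exact hg k.2

end Step


section Step2

variable {S : Type*} [CommRing S] {m : ℕ} (v : Fin m → S) {ι : Type*} [Fintype ι] (e : ι → S)

lemma step_span (h : Nice v e) (p : Polynomial S) :
    ∃ c : ι × Fin (2*(m+1)) → MvPolynomial (Fin (m+1)) ℤ,
      p = ∑ k, MvPolynomial.aeval (v' v) (c k) * e' e k := by
  classical
  letI alg : Algebra (MvPolynomial (Fin (m+1)) ℤ) (Polynomial S) :=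
    ((MvPolynomial.aeval (v' v) :
      MvPolynomial (Fin (m+1)) ℤ →ₐ[ℤ] Polynomial S)).toRingHom.toAlgebra
  have hsmul : ∀ (a : MvPolynomial (Fin (m+1)) ℤ) (z : Polynomial S),
      a • z = MvPolynomial.aeval (v' v) a * z := fun a z => rfl
  set N := Submodule.span (MvPolynomial (Fin (m+1)) ℤ) (Set.range (e' e)) with hN
  -- the monic relation
  set F : ℕ → Polynomial S := fun i =>
    (-1 : Polynomial S)^i * (Polynomial.C (vvS v i) * Polynomial.X^(2*(m+1-i))) with hF
  have hrel : (Polynomial.X : Polynomial S)^(2*(m+1)) =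
      ∑ i : Fin (m+1), (-1 : Polynomial S)^(i:ℕ) *
        (v' v i * Polynomial.X^(2*(m-(i:ℕ)))) := by
    have htel := Finset.sum_range_sub' F (m+1)
    have hF0 : F 0 = Polynomial.X^(2*(m+1)) := by
      rw [hF]; simp [vvS_zero v]
    have hFlast : F (m+1) = 0 := by
      rw [hF]; simp [vvS_eq_zero v (m+1) (by omega)]
    have hconv : ∑ i : Fin (m+1), (-1 : Polynomial S)^(i:ℕ) *
        (v' v i * Polynomial.X^(2*(m-(i:ℕ))))
        = ∑ i ∈ Finset.range (m+1), (-1 : Polynomial S)^i *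
            ((Polynomial.C (vvS v (i+1)) + Polynomial.X^2 * Polynomial.C (vvS v i)) *
              Polynomial.X^(2*(m-i))) := by
      rw [← Fin.sum_univ_eq_sum_range]
      rfl
    rw [hconv]
    have hstep : ∀ i ∈ Finset.range (m+1), (-1 : Polynomial S)^i *
        ((Polynomial.C (vvS v (i+1)) + Polynomial.X^2 * Polynomial.C (vvS v i)) *
          Polynomial.X^(2*(m-i))) = F i - F (i+1) := by
      intro i hi
      rw [Finset.mem_range] at hi
      have h1 : 2*(m+1-i) = 2*(m-i)+2 := by omega
      have h2 : m+1-(i+1) = m-i := by omega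
      rw [hF]
      simp only [h2, h1]
      rw [pow_succ]
      ring
    rw [Finset.sum_congr rfl hstep, htel, hF0, hFlast, sub_zero]
  -- multiplication by X preserves N
  have hmulX : ∀ z ∈ N, Polynomial.X * z ∈ N := by
    intro z hz
    induction hz using Submodule.span_induction with
    | mem w hw =>
      obtain ⟨⟨k, j⟩, rfl⟩ := hw
      have hxe : Polynomial.X * e' e (k, j) = Polynomial.C (e k) * Polynomial.X^((j:ℕ)+1) := by
        simp only [e']; ring
      rw [hxe]
      by_cases hj : (j:ℕ)+1 < 2*(m+1)
      · exact Submodule.subset_span ⟨(k, ⟨(j:ℕ)+1, hj⟩), rfl⟩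
      · have hj2 : (j:ℕ)+1 = 2*(m+1) := by have := j.isLt; omega
        rw [hj2, hrel, Finset.mul_sum]
        apply Submodule.sum_mem
        intro i _
        have hbound : 2*(m-(i:ℕ)) < 2*(m+1) := by omega
        have hterm : Polynomial.C (e k) * ((-1 : Polynomial S)^(i:ℕ) *
            (v' v i * Polynomial.X^(2*(m-(i:ℕ))))) =
            MvPolynomial.aeval (v' v)
                ((-1 : MvPolynomial (Fin (m+1)) ℤ)^(i:ℕ) * X i) *
              e' e (k, (⟨2*(m-(i:ℕ)), hbound⟩ : Fin (2*(m+1)))) := by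
          rw [map_mul, map_pow, map_neg, map_one, MvPolynomial.aeval_X]
          simp only [e']
          ring
        rw [hterm, ← hsmul]
        exact Submodule.smul_mem _ _
          (Submodule.subset_span ⟨(k, (⟨2*(m-(i:ℕ)), hbound⟩ : Fin (2*(m+1)))), rfl⟩)
    | zero => rw [mul_zero]; exact Submodule.zero_mem N
    | add x y hx hy ihx ihy => rw [mul_add]; exact Submodule.add_mem _ ihx ihy
    | smul a x hx ih =>
      rw [hsmul, ← mul_assoc, mul_comm Polynomial.X, mul_assoc, ← hsmul]
      exact Submodule.smul_mem _ _ ih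
  -- multiplication by C (vvS j)
  have hCvv : ∀ (j : ℕ), ∀ z ∈ N, Polynomial.C (vvS v j) * z ∈ N := by
    intro j
    induction j with
    | zero =>
      intro z hz
      rw [vvS_zero, map_one, one_mul]
      exact hz
    | succ j ih =>
      intro z hz
      by_cases hj : j < m+1
      · have hv' : Polynomial.C (vvS v (j+1)) =
            v' v ⟨j, hj⟩ - Polynomial.X^2 * Polynomial.C (vvS v j) := by
          simp only [v']
          ring
        rw [hv', sub_mul]
        apply Submodule.sub_mem
        · have hx : v' v ⟨j, hj⟩ * z = MvPolynomial.aeval (v' v)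
              (X ⟨j, hj⟩ : MvPolynomial (Fin (m+1)) ℤ) * z := by
            rw [MvPolynomial.aeval_X]
          rw [hx, ← hsmul]
          exact Submodule.smul_mem _ _ hz
        · have hx : Polynomial.X^2 * Polynomial.C (vvS v j) * z
              = Polynomial.X * (Polynomial.X * (Polynomial.C (vvS v j) * z)) := by ring
          rw [hx]
          exact hmulX _ (hmulX _ (ih z hz))
      · rw [vvS_eq_zero v (j+1) (by omega), map_zero, zero_mul]
        exact Submodule.zero_mem N
  -- multiplication by C (aeval v q)
  have hCa : ∀ (q : MvPolynomial (Fin m) ℤ), ∀ z ∈ N,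
      Polynomial.C (MvPolynomial.aeval v q) * z ∈ N := by
    intro q
    induction q using MvPolynomial.induction_on with
    | C r =>
      intro z hz
      have hx : Polynomial.C (MvPolynomial.aeval v (MvPolynomial.C r)) * z
          = (MvPolynomial.C r : MvPolynomial (Fin (m+1)) ℤ) • z := by
        rw [hsmul, MvPolynomial.aeval_C, MvPolynomial.aeval_C, ← Polynomial.algebraMap_apply]
      rw [hx]
      exact Submodule.smul_mem _ _ hz
    | add q1 q2 h1 h2 =>
      intro z hz
      rw [map_add, map_add, add_mul]
      exact Submodule.add_mem _ (h1 z hz) (h2 z hz)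
    | mul_X q i hq =>
      intro z hz
      rw [map_mul, MvPolynomial.aeval_X, map_mul, mul_assoc, ← vvS_succ_eq v i]
      exact hq _ (hCvv ((i:ℕ)+1) z hz)
  -- generators with arbitrary X powers
  have hgen : ∀ (k : ι) (j : ℕ), Polynomial.C (e k) * Polynomial.X^j ∈ N := by
    intro k j
    induction j with
    | zero => exact Submodule.subset_span ⟨(k, ⟨0, by omega⟩), rfl⟩
    | succ j ih =>
      by_cases hj : j+1 < 2*(m+1)
      · exact Submodule.subset_span ⟨(k, ⟨j+1, hj⟩), rfl⟩
      · have hx : Polynomial.C (e k) * Polynomial.X^(j+1)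
            = Polynomial.X * (Polynomial.C (e k) * Polynomial.X^j) := by ring
        rw [hx]
        exact hmulX _ ih
  -- everything is in N
  have htop : p ∈ N := by
    induction p using Polynomial.induction_on' with
    | add p q hp hq => exact Submodule.add_mem _ hp hq
    | monomial d a =>
      obtain ⟨c0, hc0⟩ := h.1 a
      have hx : (Polynomial.monomial d) a = ∑ k, Polynomial.C (MvPolynomial.aeval v (c0 k)) *
          (Polynomial.C (e k) * Polynomial.X^d) := by
        rw [← Polynomial.C_mul_X_pow_eq_monomial, hc0, map_sum, Finset.sum_mul]
        apply Finset.sum_congr rfl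
        intro k _
        rw [map_mul]
        ring
      rw [hx]
      exact Submodule.sum_mem _ (fun k _ => hCa (c0 k) _ (hgen k d))
  obtain ⟨c, hc⟩ := (Submodule.mem_span_range_iff_exists_fun _).mp (hN ▸ htop)
  refine ⟨c, ?_⟩
  rw [← hc]
  apply Finset.sum_congr rfl
  intro k _
  rw [hsmul]

lemma step_nice (h : Nice v e) : Nice (v' v) (e' (m := m) e) :=
  ⟨step_span v e h, step_indep v e h⟩

end Step2


section TRec

lemma t_zero (n : ℕ) : t n 0 = 1 := by
  simp [t]

lemma t_gt (n i : ℕ) (h : n < i) : t n i = 0 := by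
  rw [t, Finset.powersetCard_eq_empty.mpr (by simpa using h), Finset.sum_empty]

lemma sum_powerset_image (n i : ℕ) :
    ∑ S ∈ Finset.powersetCard i ((Finset.univ : Finset (Fin n)).image Fin.succ),
      ∏ y ∈ S, (X y : MvPolynomial (Fin (n+1)) ℤ)^2
    = rename Fin.succ (t n i) := by
  classical
  rw [t, map_sum]
  symm
  apply Finset.sum_bij (fun (T : Finset (Fin n)) (_ : T ∈ Finset.powersetCard i Finset.univ)
    => T.image Fin.succ)
  · intro T hT
    rw [Finset.mem_powersetCard] at hT ⊢
    exact ⟨Finset.image_subset_image hT.1, by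
      rw [Finset.card_image_of_injective _ (Fin.succ_injective n), hT.2]⟩
  · intro T1 h1 T2 h2 heq
    exact Finset.image_injective (Fin.succ_injective n) heq
  · intro S hS
    rw [Finset.mem_powersetCard] at hS
    have himg : (Finset.univ.filter (fun y => Fin.succ y ∈ S)).image Fin.succ = S := by
      ext x
      simp only [Finset.mem_image, Finset.mem_filter, Finset.mem_univ, true_and]
      constructor
      · rintro ⟨y, hy, rfl⟩; exact hy
      · intro hx
        obtain ⟨y, _, rfl⟩ := Finset.mem_image.mp (hS.1 hx)
        exact ⟨y, hx, rfl⟩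
    refine ⟨Finset.univ.filter (fun y => Fin.succ y ∈ S), ?_, himg⟩
    rw [Finset.mem_powersetCard]
    refine ⟨Finset.subset_univ _, ?_⟩
    have hcard := congrArg Finset.card himg
    rw [Finset.card_image_of_injective _ (Fin.succ_injective n)] at hcard
    rw [hcard, hS.2]
  · intro T hT
    rw [map_prod, Finset.prod_image (fun a _ b _ h => Fin.succ_injective n h)]
    apply Finset.prod_congr rfl
    intro y _
    rw [map_pow, rename_X]

lemma t_rec (n j : ℕ) : t (n+1) (j+1) =
    rename Fin.succ (t n (j+1)) + (X 0 : MvPolynomial (Fin (n+1)) ℤ)^2 * rename Fin.succ (t n j) := by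
  classical
  have huniv : (Finset.univ : Finset (Fin (n+1)))
      = insert 0 ((Finset.univ : Finset (Fin n)).image Fin.succ) := by
    ext x
    simp only [Finset.mem_univ, Finset.mem_insert, Finset.mem_image, true_iff]
    rcases Fin.eq_zero_or_eq_succ x with h | ⟨y, rfl⟩
    · exact Or.inl h
    · exact Or.inr ⟨y, trivial, rfl⟩
  have h0 : (0 : Fin (n+1)) ∉ (Finset.univ : Finset (Fin n)).image Fin.succ := by
    simp [Fin.succ_ne_zero, eq_comm]
  rw [t, huniv, Finset.powersetCard_succ_insert h0]
  have hdisj : Disjoint (Finset.powersetCard (j+1) ((Finset.univ : Finset (Fin n)).image Fin.succ))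
      ((Finset.powersetCard j ((Finset.univ : Finset (Fin n)).image Fin.succ)).image (insert 0)) := by
    rw [Finset.disjoint_left]
    intro S hS1 hS2
    rw [Finset.mem_powersetCard] at hS1
    obtain ⟨T, hT, rfl⟩ := Finset.mem_image.mp hS2
    exact h0 (hS1.1 (Finset.mem_insert_self 0 T))
  rw [Finset.sum_union hdisj, sum_powerset_image]
  congr 1
  -- second sum
  have hinj : ∀ S ∈ Finset.powersetCard j ((Finset.univ : Finset (Fin n)).image Fin.succ),
      ∀ T ∈ Finset.powersetCard j ((Finset.univ : Finset (Fin n)).image Fin.succ),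
      insert 0 S = insert 0 T → S = T := by
    intro S hS T hT heq
    have h0S : (0 : Fin (n+1)) ∉ S := fun h =>
      h0 ((Finset.mem_powersetCard.mp hS).1 h)
    have h0T : (0 : Fin (n+1)) ∉ T := fun h =>
      h0 ((Finset.mem_powersetCard.mp hT).1 h)
    rw [← Finset.erase_insert h0S, ← Finset.erase_insert h0T, heq]
  rw [Finset.sum_image hinj]
  rw [← sum_powerset_image n j, Finset.mul_sum]
  apply Finset.sum_congr rfl
  intro S hS
  have h0S : (0 : Fin (n+1)) ∉ S := fun h =>
    h0 ((Finset.mem_powersetCard.mp hS).1 h)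
  rw [Finset.prod_insert h0S]

lemma finSuccEquiv_rename_succ (n : ℕ) (p : MvPolynomial (Fin n) ℤ) :
    MvPolynomial.finSuccEquiv ℤ n (rename Fin.succ p) = Polynomial.C p := by
  induction p using MvPolynomial.induction_on with
  | C r =>
    rw [rename_C]
    have : (MvPolynomial.C r : MvPolynomial (Fin (n+1)) ℤ) = (r : MvPolynomial (Fin (n+1)) ℤ) := by
      simp [MvPolynomial.C_eq_smul_one, zsmul_eq_mul]
    rw [this, map_intCast]
    have h2 : (MvPolynomial.C r : MvPolynomial (Fin n) ℤ) = (r : MvPolynomial (Fin n) ℤ) := by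
      simp [MvPolynomial.C_eq_smul_one, zsmul_eq_mul]
    rw [h2]
    simp
  | add p q hp hq => rw [map_add, map_add, hp, hq, map_add]
  | mul_X p i hp => rw [map_mul, map_mul, hp, rename_X, MvPolynomial.finSuccEquiv_X_succ, map_mul]

end TRec

section Outer

/-- The family `t n 1, …, t n n`. -/
noncomputable def tv (n : ℕ) : Fin n → MvPolynomial (Fin n) ℤ := fun i => t n ((i : ℕ)+1)

lemma vvS_tv (n : ℕ) (j : ℕ) : vvS (tv n) j = t n j := by
  match j with
  | 0 => rw [vvS_zero, t_zero]
  | (j+1) =>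
    by_cases hj : j < n
    · have h := vvS_succ_eq (tv n) ⟨j, hj⟩
      rw [h]
      rfl
    · rw [vvS_eq_zero _ _ (by omega), t_gt n _ (by omega)]

lemma nice_map {S S' : Type*} [CommRing S] [CommRing S'] (φ : S ≃ₐ[ℤ] S') {m : ℕ}
    (v : Fin m → S) {ι : Type*} [Fintype ι] (e : ι → S) (h : Nice v e) :
    Nice (fun i => φ (v i)) (fun k => φ (e k)) := by
  constructor
  · intro s'
    obtain ⟨c, hc⟩ := h.1 (φ.symm s')
    refine ⟨c, ?_⟩
    have h2 := congrArg φ hc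
    rw [AlgEquiv.apply_symm_apply, map_sum] at h2
    rw [h2]
    apply Finset.sum_congr rfl
    intro k _
    rw [map_mul]
    congr 1
    have h4 := MvPolynomial.comp_aeval_apply (φ.toAlgHom) (c k) (f := v)
    simpa using h4
  · intro c hc k
    apply h.2 c ?_ k
    apply φ.injective
    rw [map_sum, map_zero]
    rw [← hc]
    apply Finset.sum_congr rfl
    intro k _
    rw [map_mul]
    congr 1
    have h4 := MvPolynomial.comp_aeval_apply (φ.toAlgHom) (c k) (f := v)
    simpa using h4

lemma exists_nice (n : ℕ) : ∃ (ι : Type) (_ : Fintype ι) (e : ι → MvPolynomial (Fin n) ℤ),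
    Nice (tv n) e := by
  induction n with
  | zero =>
    refine ⟨PUnit, inferInstance, fun _ => 1, ?_, ?_⟩
    · intro s
      refine ⟨fun _ => rename (Fin.elim0) s, ?_⟩
      rw [Finset.univ_unique, Finset.sum_singleton, mul_one]
      induction s using MvPolynomial.induction_on with
      | C r => rw [rename_C, MvPolynomial.aeval_C]; rfl
      | add p q hp hq => rw [map_add, map_add, ← hp, ← hq]
      | mul_X p i _ => exact absurd i.isLt (by omega)
    · intro c hc k
      have h2 : MvPolynomial.aeval (tv 0) (c k) * 1 = 0 := by
        rw [← hc, Finset.univ_unique, Finset.sum_singleton]; rfl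
      rw [mul_one] at h2
      obtain ⟨a, ha⟩ : ∃ a, c k = MvPolynomial.C a := ⟨_, (MvPolynomial.eq_C_of_isEmpty (c k))⟩
      rw [ha, MvPolynomial.aeval_C] at h2
      have : a = 0 := by
        have h3 : (MvPolynomial.C a : MvPolynomial (Fin 0) ℤ) = 0 := h2
        exact (MvPolynomial.C_eq_zero).mp h3
      rw [ha, this, map_zero]
  | succ n ih =>
    obtain ⟨ι, instι, e, h⟩ := ih
    have h2 := step_nice (tv n) e h
    have h3 := nice_map (MvPolynomial.finSuccEquiv ℤ n).symm _ _ h2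
    have key : ∀ i : Fin (n+1), MvPolynomial.finSuccEquiv ℤ n (t (n+1) ((i:ℕ)+1))
        = v' (tv n) i := by
      intro i
      rw [t_rec n (i : ℕ), map_add, map_mul, map_pow, MvPolynomial.finSuccEquiv_X_zero,
        finSuccEquiv_rename_succ, finSuccEquiv_rename_succ]
      simp only [v', vvS_tv]
    have hv : (fun i => (MvPolynomial.finSuccEquiv ℤ n).symm (v' (tv n) i)) = tv (n+1) := by
      funext i
      apply (MvPolynomial.finSuccEquiv ℤ n).injective
      rw [AlgEquiv.apply_symm_apply]
      exact (key i).symm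
    replace h3 : Nice (tv (n+1)) (fun k => (MvPolynomial.finSuccEquiv ℤ n).symm (e' (m := n) e k)) := by
      convert h3 using 1
      exact hv.symm
      rfl
    exact ⟨ι × Fin (2*(n+1)), inferInstance, _, h3⟩

end Outer


section Final

lemma tv_mem_K (n : ℕ) (i : Fin n) : tv n i ∈ K n := by
  apply Ideal.subset_span
  exact ⟨(i : ℕ)+1, ⟨by omega, by omega⟩, rfl⟩

lemma aeval_mem_K (n : ℕ) (c : MvPolynomial (Fin n) ℤ) (hc : constantCoeff c = 0) :
    MvPolynomial.aeval (tv n) c ∈ K n := by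
  have hmem : c ∈ Ideal.span (Set.range (X : Fin n → MvPolynomial (Fin n) ℤ)) := by
    rw [← Set.image_univ, mem_ideal_span_X_image]
    intro mm hm
    by_contra hall
    push_neg at hall
    have hmm : mm = 0 := by
      ext i
      simpa using hall i (Set.mem_univ i)
    rw [mem_support_iff, hmm] at hm
    exact hm hc
  obtain ⟨d, hd⟩ := (Ideal.mem_span_range_iff_exists_fun).mp hmem
  rw [← hd, map_sum]
  apply Ideal.sum_mem
  intro i _
  rw [map_mul, MvPolynomial.aeval_X]
  exact Ideal.mul_mem_left _ _ (tv_mem_K n i)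

variable {n : ℕ} {ι : Type} [Fintype ι] {e : ι → MvPolynomial (Fin n) ℤ}

lemma rep_mem_K (c : ι → MvPolynomial (Fin n) ℤ)
    (hc : ∀ k, constantCoeff (c k) = 0) :
    ∑ k, MvPolynomial.aeval (tv n) (c k) * e k ∈ K n := by
  apply Ideal.sum_mem
  intro k _
  exact Ideal.mul_mem_right _ _ (aeval_mem_K n (c k) (hc k))

lemma mem_K_rep (h : Nice (tv n) e) (f : MvPolynomial (Fin n) ℤ) (hf : f ∈ K n) :
    ∃ c : ι → MvPolynomial (Fin n) ℤ, (∀ k, constantCoeff (c k) = 0) ∧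
      f = ∑ k, MvPolynomial.aeval (tv n) (c k) * e k := by
  classical
  choose rep hrep using h.1
  induction hf using Submodule.span_induction with
  | mem x hx =>
    obtain ⟨i, hi, rfl⟩ := hx
    simp only [Set.mem_Icc] at hi
    have hilt : i - 1 < n := by omega
    have hti : t n i = tv n ⟨i-1, hilt⟩ := by
      have hv : (⟨i-1, hilt⟩ : Fin n).val + 1 = i := by
        show i - 1 + 1 = i
        omega
      rw [tv, hv]
    refine ⟨fun k => X ⟨i-1, hilt⟩ * rep 1 k, ?_, ?_⟩
    · intro k
      rw [map_mul, constantCoeff_X, zero_mul]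
    · calc t n i = tv n ⟨i-1, hilt⟩ * 1 := by rw [hti, mul_one]
        _ = tv n ⟨i-1, hilt⟩ * ∑ k, MvPolynomial.aeval (tv n) (rep 1 k) * e k := by
            rw [← (show (1 : MvPolynomial (Fin n) ℤ) = ∑ k, MvPolynomial.aeval (tv n) (rep 1 k) * e k from hrep 1)]
        _ = ∑ k, MvPolynomial.aeval (tv n) (X ⟨i-1, hilt⟩ * rep 1 k) * e k := by
            rw [Finset.mul_sum]
            apply Finset.sum_congr rfl
            intro k _
            rw [map_mul, MvPolynomial.aeval_X]
            ring
  | zero =>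
    exact ⟨0, fun k => by simp, by simp⟩
  | add x y hx hy ihx ihy =>
    obtain ⟨cx, hcx0, hcx⟩ := ihx
    obtain ⟨cy, hcy0, hcy⟩ := ihy
    refine ⟨cx + cy, fun k => ?_, ?_⟩
    · simp only [Pi.add_apply, map_add, hcx0 k, hcy0 k, add_zero]
    · rw [hcx, hcy, ← Finset.sum_add_distrib]
      apply Finset.sum_congr rfl
      intro k _
      simp only [Pi.add_apply, map_add]
      ring
  | smul g x hx ihx =>
    obtain ⟨c, hc0, hcx⟩ := ihx
    obtain ⟨d, hd⟩ := h.1 g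
    refine ⟨fun r => ∑ l, ∑ k, d l * c k * rep (e l * e k) r, ?_, ?_⟩
    · intro r
      rw [map_sum]
      apply Finset.sum_eq_zero
      intro l _
      rw [map_sum]
      apply Finset.sum_eq_zero
      intro k _
      rw [map_mul, map_mul, hc0 k, mul_zero, zero_mul]
    · have lhs : g • x = ∑ l, ∑ k, MvPolynomial.aeval (tv n) (d l) *
          MvPolynomial.aeval (tv n) (c k) * (e l * e k) := by
        rw [smul_eq_mul, (show g = ∑ k, MvPolynomial.aeval (tv n) (d k) * e k from hd), hcx, Finset.sum_mul_sum]
        apply Finset.sum_congr rfl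
        intro l _
        apply Finset.sum_congr rfl
        intro k _
        ring
      rw [lhs]
      symm
      calc ∑ r, MvPolynomial.aeval (tv n) (∑ l, ∑ k, d l * c k * rep (e l * e k) r) * e r
          = ∑ r, ∑ l, ∑ k, MvPolynomial.aeval (tv n) (d l * c k * rep (e l * e k) r) * e r := by
            apply Finset.sum_congr rfl
            intro r _
            rw [map_sum, Finset.sum_mul]
            apply Finset.sum_congr rfl
            intro l _
            rw [map_sum, Finset.sum_mul]
        _ = ∑ l, ∑ r, ∑ k, MvPolynomial.aeval (tv n) (d l * c k * rep (e l * e k) r) * e r := by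
            rw [Finset.sum_comm]
        _ = ∑ l, ∑ k, ∑ r, MvPolynomial.aeval (tv n) (d l * c k * rep (e l * e k) r) * e r := by
            apply Finset.sum_congr rfl
            intro l _
            rw [Finset.sum_comm]
        _ = ∑ l, ∑ k, MvPolynomial.aeval (tv n) (d l) * MvPolynomial.aeval (tv n) (c k) *
              (e l * e k) := by
            apply Finset.sum_congr rfl
            intro l _
            apply Finset.sum_congr rfl
            intro k _
            have hterm : ∀ r ∈ Finset.univ, MvPolynomial.aeval (tv n)
                (d l * c k * rep (e l * e k) r) * e r
                = MvPolynomial.aeval (tv n) (d l) * MvPolynomial.aeval (tv n) (c k) *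
                  (MvPolynomial.aeval (tv n) (rep (e l * e k) r) * e r) := by
              intro r _
              rw [map_mul, map_mul]
              ring
            rw [Finset.sum_congr rfl hterm, ← Finset.mul_sum, ← (show e l * e k = ∑ r, MvPolynomial.aeval (tv n) (rep (e l * e k) r) * e r from hrep (e l * e k))]

end Final


end StmtAux

theorem stmt1 (n : ℕ) (hn : 1 ≤ n) (d : ℕ) (hd : 2 ≤ d)
    (M : ℕ) (hM : 0 < M)
    (P : MvPolynomial (Fin n) ℤ) (hPK : P ∈ K n) (hhom : P.IsHomogeneous d)
    (hdvd : (C (M : ℤ) : MvPolynomial (Fin n) ℤ) ∣ P) :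
    ∃ Q ∈ K n, P = (C (M : ℤ) : MvPolynomial (Fin n) ℤ) * Q := by
  obtain ⟨ι, instι, e, h⟩ := StmtAux.exists_nice n
  letI : Fintype ι := instι
  obtain ⟨Q, hPQ⟩ := hdvd
  obtain ⟨c, hc⟩ := h.1 Q
  obtain ⟨dd, hd0, hdrep⟩ := StmtAux.mem_K_rep h P hPK
  have hzero : ∑ k, MvPolynomial.aeval (StmtAux.tv n)
      ((MvPolynomial.C (M:ℤ)) * c k - dd k) * e k = 0 := by
    calc ∑ k, MvPolynomial.aeval (StmtAux.tv n) ((MvPolynomial.C (M:ℤ)) * c k - dd k) * e k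
        = ∑ k, ((MvPolynomial.C (M:ℤ)) * (MvPolynomial.aeval (StmtAux.tv n) (c k) * e k)
            - MvPolynomial.aeval (StmtAux.tv n) (dd k) * e k) := by
          apply Finset.sum_congr rfl
          intro k _
          rw [map_sub, map_mul, MvPolynomial.aeval_C, MvPolynomial.algebraMap_eq]
          ring
      _ = (MvPolynomial.C (M:ℤ)) * (∑ k, MvPolynomial.aeval (StmtAux.tv n) (c k) * e k)
            - ∑ k, MvPolynomial.aeval (StmtAux.tv n) (dd k) * e k := by
          rw [Finset.sum_sub_distrib, Finset.mul_sum]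
      _ = (MvPolynomial.C (M:ℤ)) * Q - P := by rw [← (show Q = ∑ k, MvPolynomial.aeval (StmtAux.tv n) (c k) * e k from hc), ← hdrep]
      _ = 0 := by rw [hPQ]; ring
  have hck := h.2 _ hzero
  have hconst : ∀ k, constantCoeff (c k) = 0 := by
    intro k
    have h5 := hck k
    have h6 : MvPolynomial.C (M:ℤ) * c k = dd k := sub_eq_zero.mp h5
    have h7 := congrArg MvPolynomial.constantCoeff h6
    rw [map_mul, MvPolynomial.constantCoeff_C, hd0 k] at h7
    have hM' : (M:ℤ) ≠ 0 := by exact_mod_cast hM.ne'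
    exact (mul_eq_zero.mp h7).resolve_left hM'
  refine ⟨Q, ?_, hPQ⟩
  rw [hc]
  exact StmtAux.rep_mem_K c hconst
end

section
/- Every homogeneous element P of degree d ≥ 2 of the ideal K can be written as P = Σ_{i=1}^{m} f_i·t_i where m = min(n, ⌊d/2⌋) and each f_i ∈ ℤ[x_1, …, x_n] is homogeneous of degree d − 2i. -/
open MvPolynomial Finset

lemma t_isHomogeneous (n i : ℕ) : (t n i).IsHomogeneous (2 * i) := by
  apply MvPolynomial.IsHomogeneous.sum
  intro S hS
  have hcard : S.card = i := (Finset.mem_powersetCard.mp hS).2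
  have : (∏ j ∈ S, (X j : MvPolynomial (Fin n) ℤ) ^ 2).IsHomogeneous (∑ _j ∈ S, 2) :=
    MvPolynomial.IsHomogeneous.prod S _ _ fun j _ =>
      (MvPolynomial.isHomogeneous_X _ j).pow 2
  simpa [hcard, mul_comm] using this

lemma hc_mul_homog {σ : Type*} (p q : MvPolynomial σ ℤ) {e : ℕ}
    (hq : q.IsHomogeneous e) (m : ℕ) :
    homogeneousComponent m (p * q) =
      if e ≤ m then homogeneousComponent (m - e) p * q else 0 := by
  conv_lhs => rw [← sum_homogeneousComponent p, Finset.sum_mul, map_sum]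
  have key : ∀ i : ℕ, homogeneousComponent m (homogeneousComponent i p * q) =
      if m = i + e then homogeneousComponent i p * q else 0 := fun i =>
    homogeneousComponent_of_mem
      ((mem_homogeneousSubmodule _ _).mpr
        ((homogeneousComponent_isHomogeneous i p).mul hq))
  simp_rw [key]
  by_cases he : e ≤ m
  · have hcond : ∀ i : ℕ, (m = i + e) ↔ i = m - e := by omega
    simp_rw [hcond]
    rw [Finset.sum_ite_eq' (Finset.range (p.totalDegree + 1)) (m - e)
      (fun i => homogeneousComponent i p * q)]
    by_cases hmem : m - e ∈ Finset.range (p.totalDegree + 1)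
    · simp [hmem, he]
    · have : p.totalDegree < m - e := by
        simp only [Finset.mem_range, Nat.lt_succ_iff, not_le] at hmem
        omega
      simp [hmem, he, homogeneousComponent_eq_zero _ p this]
  · rw [if_neg he]
    apply Finset.sum_eq_zero
    intro i _
    rw [if_neg (by omega)]

theorem stmt2 (n : ℕ) (d : ℕ) (hd : 2 ≤ d)
    (P : MvPolynomial (Fin n) ℤ) (hPK : P ∈ K n) (hhom : P.IsHomogeneous d) :
    ∃ f : ℕ → MvPolynomial (Fin n) ℤ,
      (∀ i ∈ Finset.Icc 1 (min n (d / 2)), (f i).IsHomogeneous (d - 2 * i)) ∧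
      P = ∑ i ∈ Finset.Icc 1 (min n (d / 2)), f i * t n i := by
  rw [K, Ideal.span] at hPK
  obtain ⟨l, hl, rfl⟩ := (Finsupp.mem_span_image_iff_linearCombination
    (MvPolynomial (Fin n) ℤ) (v := fun i => t n i) (s := Set.Icc 1 n)).mp hPK
  set P := Finsupp.linearCombination (MvPolynomial (Fin n) ℤ) (fun i => t n i) l with hP
  have hsum : P = ∑ i ∈ Finset.Icc 1 n, l i * t n i := by
    rw [hP, Finsupp.linearCombination_apply, Finsupp.sum]
    simp_rw [smul_eq_mul]
    apply Finset.sum_subset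
    · intro x hx
      simpa [Finset.mem_Icc, Set.mem_Icc] using hl hx
    · intro x _ hx
      simp [Finsupp.notMem_support_iff.mp hx]
  refine ⟨fun i => homogeneousComponent (d - 2 * i) (l i), fun i _ =>
    homogeneousComponent_isHomogeneous _ _, ?_⟩
  have hPd : homogeneousComponent d P = P := by
    rw [homogeneousComponent_of_mem ((mem_homogeneousSubmodule _ _).mpr hhom)]
    simp
  conv_lhs => rw [← hPd, hsum, map_sum]
  have step : ∀ i ∈ Finset.Icc 1 n, homogeneousComponent d (l i * t n i) =
      if 2 * i ≤ d then homogeneousComponent (d - 2 * i) (l i) * t n i else 0 :=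
    fun i _ => hc_mul_homog (l i) (t n i) (t_isHomogeneous n i) d
  rw [Finset.sum_congr rfl step, Finset.sum_ite, Finset.sum_const_zero, add_zero]
  apply Finset.sum_congr _ (fun _ _ => rfl)
  ext i
  simp only [Finset.mem_filter, Finset.mem_Icc, le_min_iff]
  omega
end

section
/- Let n ≥ 4 and let A = ℤ[1/2]. A polynomial f ∈ A[x_1, …, x_n] is fixed by every even-signed permutation of the variables (x_j ↦ ε_j x_{σ(j)}, σ ∈ S_n, ε_j ∈ {±1} with an even number of ε_j equal to −1) if and only if f lies in the A-subalgebra generated by t_1, …, t_{n−1} and p_n = x_1⋯x_n. In other words, the invariant ring of the type-D_n Weyl group action on A[x_1, …, x_n] is ℤ[1/2][t_1, …, t_{n−1}, p_n], i.e. S^*(Λ)^W ⊗ ℤ[1/2] = ℤ[1/2][t_1, …, t_{n−1}, p_n] for type D_n. -/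
open MvPolynomial Finset

/-- `A = ℤ[1/2]`, the localization of `ℤ` away from 2. -/
abbrev Ahalf : Type := Localization.Away (2 : ℤ)

/-- `tA n i = s_i(x_1^2, …, x_n^2)` over `ℤ[1/2]`. -/
noncomputable def tA (n i : ℕ) : MvPolynomial (Fin n) Ahalf :=
  ∑ S ∈ Finset.powersetCard i (Finset.univ : Finset (Fin n)),
    ∏ j ∈ S, (X j : MvPolynomial (Fin n) Ahalf) ^ 2

/-- `p_n = x_1 x_2 ⋯ x_n` over `ℤ[1/2]`. -/
noncomputable def pnA (n : ℕ) : MvPolynomial (Fin n) Ahalf :=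
  ∏ j : Fin n, X j

instance : IsDomain Ahalf :=
  IsLocalization.isDomain_localization (le_nonZeroDivisors_of_noZeroDivisors (by
    rintro ⟨k, hk⟩; exact absurd hk (by positivity)))

lemma two_unit : IsUnit (2 : Ahalf) := by
  have := IsLocalization.Away.algebraMap_isUnit (S := Ahalf) (2 : ℤ)
  simpa using this

namespace DnProof

variable {n : ℕ}

/-- The (B_n-type) twisted action. -/
noncomputable def W (σ : Equiv.Perm (Fin n)) (ε : Fin n → Ahalf) :
    MvPolynomial (Fin n) Ahalf →ₐ[Ahalf] MvPolynomial (Fin n) Ahalf :=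
  bind₁ (fun j => C (ε j) * X (σ j))

def Sgn (ε : Fin n → Ahalf) : Prop := ∀ j, ε j = 1 ∨ ε j = -1

lemma sgn_sq {ε : Fin n → Ahalf} (h : Sgn ε) (j : Fin n) : ε j * ε j = 1 := by
  rcases h j with h' | h' <;> rw [h'] <;> ring

lemma sgn_prod {ε : Fin n → Ahalf} (h : Sgn ε) :
    (∏ j, ε j) = 1 ∨ (∏ j, ε j) = -1 := by
  refine Finset.prod_induction ε (fun x => x = 1 ∨ x = -1) ?_ (Or.inl rfl) (fun j _ => h j)
  rintro a b (ha | ha) (hb | hb) <;> rw [ha, hb] <;> [left; right; right; left] <;> ring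

lemma W_comp (σ σ' : Equiv.Perm (Fin n)) (ε ε' : Fin n → Ahalf)
    (f : MvPolynomial (Fin n) Ahalf) :
    W σ ε (W σ' ε' f) = W (σ'.trans σ) (fun j => ε' j * ε (σ' j)) f := by
  simp only [W, bind₁_bind₁]
  have hfg : (fun i => (bind₁ fun j => C (ε j) * X (σ j)) (C (ε' i) * X (σ' i)))
      = fun j => C (ε' j * ε (σ' j)) * X ((σ'.trans σ) j) := by
    funext j
    simp [algHom_C, mul_assoc, Equiv.trans_apply]
  rw [hfg]

lemma W_monomial_diag (ε : Fin n → Ahalf) (d : Fin n →₀ ℕ) (r : Ahalf) :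
    W 1 ε (monomial d r) = monomial d ((∏ j, ε j ^ d j) * r) := by
  rw [W, bind₁_monomial]
  have h1 : ∀ i ∈ d.support, (C (ε i) * X i : MvPolynomial (Fin n) Ahalf) ^ d i
      = C (ε i ^ d i) * X i ^ d i := by
    intro i _
    rw [mul_pow, map_pow]
  simp only [Equiv.Perm.one_apply] at h1 ⊢
  rw [Finset.prod_congr rfl h1, Finset.prod_mul_distrib, ← map_prod]
  have h2 : (∏ i ∈ d.support, ε i ^ d i) = ∏ j, ε j ^ d j := by
    refine Finset.prod_subset (Finset.subset_univ _) ?_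
    intro x _ hx
    rw [Finsupp.notMem_support_iff.mp hx, pow_zero]
  rw [h2, monomial_eq, Finsupp.prod, map_mul]
  ring

lemma W_coeff_diag (ε : Fin n → Ahalf) (q : MvPolynomial (Fin n) Ahalf) (m : Fin n →₀ ℕ) :
    coeff m (W 1 ε q) = (∏ j, ε j ^ m j) * coeff m q := by
  conv_lhs => rw [q.as_sum, map_sum]
  rw [Finset.sum_congr rfl (fun d _ => W_monomial_diag ε d (coeff d q))]
  rw [coeff_sum]
  simp only [coeff_monomial]
  rw [Finset.sum_ite_eq' q.support m (fun d => (∏ j, ε j ^ d j) * coeff d q)]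
  split_ifs with h
  · rfl
  · rw [MvPolynomial.notMem_support_iff.mp h, mul_zero]

/-- sign vector flipping coordinate `k` -/
def δ (k : Fin n) : Fin n → Ahalf := fun j => if j = k then -1 else 1

lemma sgn_δ (k : Fin n) : Sgn (δ k) := fun j => by unfold δ; split_ifs <;> simp

lemma prod_δ (k : Fin n) : (∏ j, δ k j) = -1 := by
  unfold δ
  rw [Finset.prod_ite_eq' Finset.univ k (fun _ => (-1 : Ahalf))]
  simp

lemma prod_δ_pow (k : Fin n) (m : Fin n →₀ ℕ) :
    (∏ j, δ k j ^ m j) = (-1 : Ahalf) ^ m k := by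
  unfold δ
  have : ∀ j ∈ Finset.univ, (if j = k then (-1:Ahalf) else 1) ^ m j
      = if j = k then (-1 : Ahalf) ^ m j else 1 := by
    intro j _; split_ifs <;> simp
  rw [Finset.prod_congr rfl this, Finset.prod_ite_eq' Finset.univ k]
  simp

lemma cancel_two {a : Ahalf} (h : a = -a) : a = 0 := by
  have h2 : 2 * a = 0 := by linear_combination h
  rcases two_unit with ⟨u, hu⟩
  calc a = ↑u⁻¹ * (2 * a) := by rw [← hu]; rw [← mul_assoc]; simp
  _ = 0 := by rw [h2, mul_zero]

lemma even_exponents (q : MvPolynomial (Fin n) Ahalf)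
    (hq : ∀ k, W 1 (δ k) q = q) (m : Fin n →₀ ℕ) (hm : coeff m q ≠ 0) (k : Fin n) :
    2 ∣ m k := by
  by_contra hodd
  have h1 : coeff m (W 1 (δ k) q) = coeff m q := by rw [hq k]
  rw [W_coeff_diag, prod_δ_pow] at h1
  have hodd' : Odd (m k) := Nat.odd_iff.mpr (Nat.two_dvd_ne_zero.mp hodd)
  have hp : ((-1 : Ahalf)) ^ (m k) = -1 := Odd.neg_one_pow (α := Ahalf) hodd'
  rw [hp] at h1
  exact hm (cancel_two (by linear_combination -h1))

lemma odd_exponents (q : MvPolynomial (Fin n) Ahalf)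
    (hq : ∀ k, W 1 (δ k) q = -q) (m : Fin n →₀ ℕ) (hm : coeff m q ≠ 0) (k : Fin n) :
    ¬ 2 ∣ m k := by
  intro heven
  have h1 : coeff m (W 1 (δ k) q) = -coeff m q := by rw [hq k]; simp
  rw [W_coeff_diag, prod_δ_pow] at h1
  rcases heven with ⟨c, hc⟩
  have hev : Even (m k) := ⟨c, by omega⟩
  have hp : ((-1 : Ahalf)) ^ (m k) = 1 := Even.neg_one_pow (α := Ahalf) hev
  rw [hp, one_mul] at h1
  exact hm (cancel_two (by linear_combination h1))

lemma expand_monomial' (d : Fin n →₀ ℕ) (r : Ahalf) :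
    expand 2 (monomial d r) = monomial (2 • d) r := by
  rw [expand_monomial, monomial_eq, Finsupp.prod]

lemma smul2_inj : Function.Injective (fun d : Fin n →₀ ℕ => 2 • d) := by
  intro a b hab
  ext j
  have := congrArg (fun m : Fin n →₀ ℕ => m j) hab
  simp only [Finsupp.smul_apply, smul_eq_mul] at this
  omega

lemma coeff_expand2 (q : MvPolynomial (Fin n) Ahalf) (d : Fin n →₀ ℕ) :
    coeff (2 • d) (expand 2 q) = coeff d q := by
  conv_lhs => rw [q.as_sum, map_sum]
  rw [Finset.sum_congr rfl (fun m _ => expand_monomial' m (coeff m q)), coeff_sum]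
  simp only [coeff_monomial]
  have : ∀ m ∈ q.support, (if 2 • m = 2 • d then coeff m q else 0)
      = if m = d then coeff m q else 0 := by
    intro m _
    congr 1
    simp only [eq_iff_iff]
    exact ⟨fun h => smul2_inj h, fun h => by rw [h]⟩
  rw [Finset.sum_congr rfl this, Finset.sum_ite_eq' q.support d (fun m => coeff m q)]
  split_ifs with h
  · rfl
  · rw [MvPolynomial.notMem_support_iff.mp h]

lemma expand2_injective :
    Function.Injective (expand 2 : MvPolynomial (Fin n) Ahalf →ₐ[Ahalf] _) := by
  intro a b hab
  ext d
  rw [← coeff_expand2 a d, ← coeff_expand2 b d, hab]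

/-- halve all exponents -/
noncomputable def halfP (q : MvPolynomial (Fin n) Ahalf) : MvPolynomial (Fin n) Ahalf :=
  ∑ m ∈ q.support, monomial (m.mapRange (· / 2) (by simp)) (coeff m q)

lemma expand2_halfP (q : MvPolynomial (Fin n) Ahalf)
    (h : ∀ m ∈ q.support, ∀ k, 2 ∣ m k) : expand 2 (halfP q) = q := by
  rw [halfP, map_sum]
  conv_rhs => rw [q.as_sum]
  refine Finset.sum_congr rfl fun m hm => ?_
  rw [expand_monomial']
  have heq : 2 • (Finsupp.mapRange (· / 2) (by simp) m) = m := by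
    ext j
    rw [Finsupp.smul_apply, Finsupp.mapRange_apply, smul_eq_mul]
    exact Nat.mul_div_cancel' (h m hm j)
  rw [heq]

/-- the all-ones exponent -/
noncomputable def on1 : Fin n →₀ ℕ := ∑ j : Fin n, Finsupp.single j 1

lemma on1_apply (j : Fin n) : (on1 : Fin n →₀ ℕ) j = 1 := by
  rw [on1, Finset.sum_apply']
  simp [Finsupp.single_apply]

lemma prod_monomial {s : Finset (Fin n)} (g : Fin n → (Fin n →₀ ℕ)) :
    (∏ j ∈ s, (monomial (g j) (1 : Ahalf))) = monomial (∑ j ∈ s, g j) 1 := by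
  induction s using Finset.induction with
  | empty => simp [monomial_eq]
  | insert _ _ hj ih =>
    rw [Finset.prod_insert hj, Finset.sum_insert hj, ih, monomial_mul, mul_one]

lemma pnA_eq : pnA n = monomial (on1 : Fin n →₀ ℕ) 1 := by
  rw [pnA, on1, ← prod_monomial]
  refine Finset.prod_congr rfl fun j _ => ?_
  rw [X]

/-- divide by x_1 ⋯ x_n -/
noncomputable def divP (q : MvPolynomial (Fin n) Ahalf) : MvPolynomial (Fin n) Ahalf :=
  ∑ m ∈ q.support, monomial (m - on1) (coeff m q)

lemma pnA_mul_divP (q : MvPolynomial (Fin n) Ahalf)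
    (h : ∀ m ∈ q.support, ∀ k, ¬ 2 ∣ m k) : pnA n * divP q = q := by
  rw [divP, Finset.mul_sum]
  conv_rhs => rw [q.as_sum]
  refine Finset.sum_congr rfl fun m hm => ?_
  rw [pnA_eq, monomial_mul, one_mul]
  have heq : (on1 + (m - on1) : Fin n →₀ ℕ) = m := by
    ext j
    have h1 : 1 ≤ m j := by have := h m hm j; omega
    simp only [Finsupp.add_apply, Finsupp.tsub_apply, on1_apply]
    omega
  rw [heq]

lemma W_eq_rename (σ : Equiv.Perm (Fin n)) (q : MvPolynomial (Fin n) Ahalf) :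
    W σ (fun _ => 1) q = rename σ q := by
  simp only [W, C_1, one_mul]
  exact DFunLike.congr_fun (algHom_ext fun i => by rw [bind₁_X_right, rename_X]) q

lemma tA_expand (i : ℕ) : tA n i = expand 2 (esymm (Fin n) Ahalf i) := by
  rw [esymm, map_sum, tA]
  refine Finset.sum_congr rfl fun S _ => ?_
  rw [map_prod]
  exact Finset.prod_congr rfl fun j _ => by rw [expand_X]

lemma W_expand2 (σ : Equiv.Perm (Fin n)) (ε : Fin n → Ahalf) (hε : Sgn ε)
    (F : MvPolynomial (Fin n) Ahalf) :
    W σ ε (expand 2 F) = expand 2 (rename σ F) := by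
  have h : (W σ ε).comp (expand 2) =
      (expand 2).comp (rename (σ : Fin n → Fin n) : MvPolynomial (Fin n) Ahalf →ₐ[Ahalf] _) := by
    apply algHom_ext
    intro i
    simp only [AlgHom.comp_apply, expand_X, rename_X, W, map_pow, bind₁_X_right]
    rw [mul_pow, ← map_pow, pow_two, sgn_sq hε, C_1, one_mul]
  calc W σ ε (expand 2 F) = ((W σ ε).comp (expand 2)) F := rfl
  _ = expand 2 (rename σ F) := by rw [h]; rfl

lemma W_tA (σ : Equiv.Perm (Fin n)) (ε : Fin n → Ahalf) (hε : Sgn ε) (i : ℕ) :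
    W σ ε (tA n i) = tA n i := by
  rw [tA_expand, W_expand2 σ ε hε, rename_esymm]

lemma W_pnA (σ : Equiv.Perm (Fin n)) (ε : Fin n → Ahalf) :
    W σ ε (pnA n) = C (∏ j, ε j) * pnA n := by
  rw [pnA, map_prod]
  simp only [W, bind₁_X_right]
  rw [Finset.prod_mul_distrib, ← map_prod]
  congr 1
  show _ = ∏ j : Fin n, X j
  exact Equiv.prod_comp σ X

lemma tA_top : tA n n = pnA n ^ 2 := by
  rw [tA, pnA]
  rw [show (Finset.univ : Finset (Fin n)).powersetCard n = {Finset.univ} by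
    simpa using Finset.powersetCard_self (Finset.univ : Finset (Fin n))]
  rw [Finset.sum_singleton, ← Finset.prod_pow]

/-- B_n-invariant polynomials are in the adjoin of the `tA n i`. -/
lemma binv_mem (q : MvPolynomial (Fin n) Ahalf)
    (hq : ∀ (σ : Equiv.Perm (Fin n)) (ε : Fin n → Ahalf), Sgn ε → W σ ε q = q) :
    q ∈ Algebra.adjoin Ahalf
      {p : MvPolynomial (Fin n) Ahalf | ∃ i ∈ Finset.Icc 1 n, p = tA n i} := by
  have heven : ∀ m ∈ q.support, ∀ k, 2 ∣ m k := by
    intro m hm k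
    exact even_exponents q (fun k' => hq 1 (δ k') (sgn_δ k'))
      m (MvPolynomial.mem_support_iff.mp hm) k
  set G := halfP q with hGdef
  have hGq : expand 2 G = q := expand2_halfP q heven
  have hGsym : G.IsSymmetric := by
    intro e
    apply expand2_injective
    show expand 2 (rename e G) = expand 2 G
    rw [← rename_expand, hGq]
    rw [← W_eq_rename]
    exact hq e (fun _ => 1) (fun _ => Or.inl rfl)
  obtain ⟨Q, hQ⟩ := esymmAlgHom_surjective (σ := Fin n) (R := Ahalf) (n := n)
    (by simp) ⟨G, (G.mem_symmetricSubalgebra).mpr hGsym⟩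
  have hval : aeval (fun i : Fin n => esymm (Fin n) Ahalf (i + 1)) Q = G := by
    have h2 := esymmAlgHom_apply (σ := Fin n) (R := Ahalf) Q
    rw [hQ] at h2
    exact h2.symm
  have hGmem : G ∈ Algebra.adjoin Ahalf
      (Set.range fun i : Fin n => esymm (Fin n) Ahalf (i + 1)) := by
    rw [Algebra.adjoin_range_eq_range_aeval]
    exact ⟨Q, hval⟩
  have himg : q ∈ (Algebra.adjoin Ahalf
      (Set.range fun i : Fin n => esymm (Fin n) Ahalf (i + 1))).map (expand 2) :=
    ⟨G, hGmem, hGq⟩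
  rw [AlgHom.map_adjoin] at himg
  refine Algebra.adjoin_mono ?_ himg
  rintro p ⟨_, ⟨i, rfl⟩, rfl⟩
  exact ⟨(i : ℕ) + 1, by simp [Finset.mem_Icc], (tA_expand _).symm⟩

end DnProof

open DnProof in
theorem stmt9 (n : ℕ) (hn : 4 ≤ n) (f : MvPolynomial (Fin n) Ahalf) :
    (∀ (σ : Equiv.Perm (Fin n)) (ε : Fin n → Ahalf), (∀ j, ε j = 1 ∨ ε j = -1) →
      (∏ j : Fin n, ε j) = 1 →
      bind₁ (fun j : Fin n => C (ε j) * X (σ j)) f = f) ↔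
    f ∈ Algebra.adjoin Ahalf {p : MvPolynomial (Fin n) Ahalf |
          (∃ i ∈ Finset.Icc 1 (n - 1), p = tA n i) ∨ p = pnA n} := by
  constructor
  · intro H
    have hn0 : 0 < n := by omega
    have HW : ∀ (σ : Equiv.Perm (Fin n)) (ε : Fin n → Ahalf), Sgn ε → (∏ j, ε j) = 1 →
        W σ ε f = f := fun σ ε h1 h2 => H σ ε h1 h2
    set k0 : Fin n := ⟨0, hn0⟩ with hk0
    set τf := W 1 (δ k0) f with hτf
    -- any odd signed permutation sends f to τf
    have Hodd : ∀ (σ : Equiv.Perm (Fin n)) (ε : Fin n → Ahalf), Sgn ε →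
        (∏ j, ε j) = -1 → W σ ε f = τf := by
      intro σ ε hε hprod
      set ε' : Fin n → Ahalf := fun j => ε j * δ k0 (σ j) with hε'
      have hsgn' : Sgn ε' := fun j => by
        show ε j * δ k0 (σ j) = 1 ∨ ε j * δ k0 (σ j) = -1
        rcases hε j with h1 | h1 <;> rcases sgn_δ k0 (σ j) with h2 | h2 <;>
          rw [h1, h2] <;> first | (left; ring1) | (right; ring1)
      have hprod' : (∏ j, ε' j) = 1 := by
        rw [hε', Finset.prod_mul_distrib, hprod, Equiv.prod_comp σ (δ k0), prod_δ k0]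
        ring
      have hcomp := W_comp 1 σ (δ k0) ε' f
      rw [HW σ ε' hsgn' hprod'] at hcomp
      have hmul : (fun j => ε' j * δ k0 (σ j)) = ε := by
        funext j
        rcases sgn_δ k0 (σ j) with h2 | h2 <;> simp only [hε', h2] <;> ring
      rw [hmul] at hcomp
      have htr : σ.trans (1 : Equiv.Perm (Fin n)) = σ := by ext x; rfl
      rw [htr] at hcomp
      exact hcomp.symm
    -- action on τf
    have Hτ : ∀ (σ : Equiv.Perm (Fin n)) (ε : Fin n → Ahalf), Sgn ε →
        ((∏ j, ε j) = 1 → W σ ε τf = τf) ∧ ((∏ j, ε j) = -1 → W σ ε τf = f) := by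
      intro σ ε hε
      have hcomp := W_comp σ 1 ε (δ k0) f
      have htr : Equiv.trans (1 : Equiv.Perm (Fin n)) σ = σ := by ext x; rfl
      rw [htr] at hcomp
      have hη : Sgn (fun j => δ k0 j * ε ((1 : Equiv.Perm (Fin n)) j)) := fun j => by
        show δ k0 j * ε ((1 : Equiv.Perm (Fin n)) j) = 1 ∨
          δ k0 j * ε ((1 : Equiv.Perm (Fin n)) j) = -1
        rcases sgn_δ k0 j with h1 | h1 <;> rcases hε ((1:Equiv.Perm (Fin n)) j) with h2 | h2 <;>
          rw [h1, h2] <;> first | (left; ring1) | (right; ring1)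
      have hηprod : (∏ j, δ k0 j * ε ((1 : Equiv.Perm (Fin n)) j)) = -(∏ j, ε j) := by
        rw [Finset.prod_mul_distrib, prod_δ k0]
        simp only [Equiv.Perm.one_apply]
        ring
      constructor
      · intro h1
        rw [← hτf] at hcomp
        rw [hcomp, Hodd σ _ hη (by rw [hηprod, h1])]
      · intro h1
        rw [← hτf] at hcomp
        rw [hcomp, HW σ _ hη (by rw [hηprod, h1]; ring)]
    -- the halving constant
    obtain ⟨u, hu⟩ := two_unit
    set v : Ahalf := ((u⁻¹ : Ahalfˣ) : Ahalf) with hv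
    have h2v : 2 * v = 1 := by
      rw [← hu, hv]
      exact u.mul_inv
    set g := C v * (f + τf) with hgdef
    set h' := C v * (f - τf) with hh'def
    have hWC : ∀ (σ : Equiv.Perm (Fin n)) (ε : Fin n → Ahalf) (c : Ahalf),
        W σ ε (C c) = C c := fun σ ε c => algHom_C _ _
    have hg_inv : ∀ (σ : Equiv.Perm (Fin n)) (ε : Fin n → Ahalf), Sgn ε → W σ ε g = g := by
      intro σ ε hε
      rw [hgdef, map_mul, map_add, hWC]
      rcases sgn_prod hε with h1 | h1
      · rw [HW σ ε hε h1, (Hτ σ ε hε).1 h1]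
      · rw [Hodd σ ε hε h1, (Hτ σ ε hε).2 h1, add_comm]
    have hh'_sign : ∀ (σ : Equiv.Perm (Fin n)) (ε : Fin n → Ahalf), Sgn ε →
        W σ ε h' = C (∏ j, ε j) * h' := by
      intro σ ε hε
      rw [hh'def, map_mul, map_sub, hWC]
      rcases sgn_prod hε with h1 | h1
      · rw [HW σ ε hε h1, (Hτ σ ε hε).1 h1, h1, C_1, one_mul]
      · rw [Hodd σ ε hε h1, (Hτ σ ε hε).2 h1, h1]
        rw [show (C (-1 : Ahalf) : MvPolynomial (Fin n) Ahalf) = -1 by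
          rw [map_neg, C_1]]
        ring
    -- h' has all-odd exponents
    have hodd_h' : ∀ m ∈ h'.support, ∀ k, ¬ 2 ∣ m k := by
      intro m hm k
      refine odd_exponents h' ?_ m (MvPolynomial.mem_support_iff.mp hm) k
      intro k'
      rw [hh'_sign 1 (δ k') (sgn_δ k'), prod_δ k']
      rw [show (C (-1 : Ahalf) : MvPolynomial (Fin n) Ahalf) = -1 by rw [map_neg, C_1]]
      ring
    set h := divP h' with hhdef
    have hfact : pnA n * h = h' := pnA_mul_divP h' hodd_h'
    have hpn_ne : pnA n ≠ 0 := by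
      rw [pnA]
      exact Finset.prod_ne_zero_iff.mpr fun j _ => X_ne_zero j
    have hh_inv : ∀ (σ : Equiv.Perm (Fin n)) (ε : Fin n → Ahalf), Sgn ε → W σ ε h = h := by
      intro σ ε hε
      have hCne : (C (∏ j, ε j) : MvPolynomial (Fin n) Ahalf) ≠ 0 := by
        rw [Ne, MvPolynomial.C_eq_zero]
        rcases sgn_prod hε with h1 | h1 <;> rw [h1]
        · exact one_ne_zero
        · exact neg_ne_zero.mpr one_ne_zero
      have h1 : W σ ε (pnA n * h) = C (∏ j, ε j) * (pnA n * h) := by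
        rw [hfact, hh'_sign σ ε hε]
      rw [map_mul, W_pnA, mul_assoc] at h1
      exact mul_left_cancel₀ hpn_ne (mul_left_cancel₀ hCne h1)
    -- both parts are in the adjoin of the tA's
    have hgmem := binv_mem g hg_inv
    have hhmem := binv_mem h hh_inv
    -- transfer into the target algebra
    set T := Algebra.adjoin Ahalf {p : MvPolynomial (Fin n) Ahalf |
          (∃ i ∈ Finset.Icc 1 (n - 1), p = tA n i) ∨ p = pnA n} with hT
    have hpnT : pnA n ∈ T := Algebra.subset_adjoin (Or.inr rfl)
    have htAT : ∀ i ∈ Finset.Icc 1 n, tA n i ∈ T := by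
      intro i hi
      rw [Finset.mem_Icc] at hi
      rcases Nat.lt_or_ge i n with hlt | hge
      · exact Algebra.subset_adjoin (Or.inl ⟨i, Finset.mem_Icc.mpr ⟨hi.1, by omega⟩, rfl⟩)
      · have : i = n := by omega
        rw [this, tA_top]
        exact pow_mem hpnT 2
    have hsub : Algebra.adjoin Ahalf
        {p : MvPolynomial (Fin n) Ahalf | ∃ i ∈ Finset.Icc 1 n, p = tA n i} ≤ T := by
      apply Algebra.adjoin_le
      rintro p ⟨i, hi, rfl⟩
      exact htAT i hi
    have hgT : g ∈ T := hsub hgmem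
    have hhT : h ∈ T := hsub hhmem
    -- f = g + pnA * h
    have hC2 : (C (2 : Ahalf) : MvPolynomial (Fin n) Ahalf) = 2 := by
      rw [map_ofNat]
    have hfeq : f = g + pnA n * h := by
      rw [hfact, hgdef, hh'def]
      have : C v * (f + τf) + C v * (f - τf) = (C v * C 2) * f := by
        rw [hC2]; ring
      rw [this, ← map_mul, mul_comm v 2, h2v, C_1, one_mul]
    rw [hfeq]
    exact add_mem hgT (mul_mem hpnT hhT)
  · intro hf σ ε hε hprod
    show W σ ε f = f
    induction hf using Algebra.adjoin_induction with
    | mem x hx =>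
      rcases hx with ⟨i, _, rfl⟩ | rfl
      · exact W_tA σ ε hε i
      · rw [W_pnA, hprod, C_1, one_mul]
    | algebraMap r => exact (W σ ε).commutes r
    | add x y _ _ hx hy => rw [map_add, hx, hy]
    | mul x y _ _ hx hy => rw [map_mul, hx, hy]
end
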